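/- arXiv:1010.4063 — 4 statements merged into one kernel-verified Lean document; each statement's English description precedes it below -/
import Mathlib

section
/- If 0 < α < 1/2, then the sequence p_n := p_n^{1,1} = P(S_{n+1} > S'_n), n = 0, 1, 2, …, is strictly increasing and strictly concave, i.e. p_{n+1} > p_n for all n and p_{n+2} − p_{n+1} < p_{n+1} − p_n for all n. -/
open Finset Filter Topology

/-- `p α r d n = P(S_{n+r} ≥ S'_n + d)` for independent binomials with success
probability `α`, given by its explicit combinatorial formula. -/
noncomputable def competeProb (α : ℝ) (r d n : ℕ) : ℝ :=
  ∑ i ∈ Finset.range (n + 1), ∑ j ∈ Finset.Icc (i + d) (n + r),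
    ((n + r).choose j : ℝ) * (n.choose i : ℝ) * α ^ (i + j) * (1 - α) ^ (2 * n + r - i - j)

namespace CPAux

noncomputable def bW (α : ℝ) (n i : ℕ) : ℝ := (n.choose i : ℝ) * α ^ i * (1 - α) ^ (n - i)

noncomputable def eD (α : ℝ) (n : ℕ) : ℝ := ∑ i ∈ range (n+1), bW α n i ^ 2
noncomputable def uU (α : ℝ) (n : ℕ) : ℝ :=
  ∑ i ∈ range (n+1), ∑ j ∈ Icc (i+1) n, bW α n i * bW α n j
noncomputable def aOne (α : ℝ) (n : ℕ) : ℝ := ∑ i ∈ range (n+1), bW α n i * bW α n (i+1)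
noncomputable def aTwo (α : ℝ) (n : ℕ) : ℝ := ∑ i ∈ range (n+1), bW α n i * bW α n (i+2)

lemma bW_big (α : ℝ) {n i : ℕ} (h : n < i) : bW α n i = 0 := by
  simp [bW, Nat.choose_eq_zero_of_lt h]

lemma bW_zero (α : ℝ) (n : ℕ) : bW α n 0 = (1-α)^n := by simp [bW]

lemma sum_bW (α : ℝ) (n : ℕ) : ∑ i ∈ range (n+1), bW α n i = 1 := by
  have h := add_pow α (1-α) n
  simp only [add_sub_cancel, one_pow] at h
  rw [h]
  exact Finset.sum_congr rfl fun i _ => by unfold bW; ring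

lemma bW_pascal (α : ℝ) (n i : ℕ) :
    bW α (n+1) (i+1) = (1 - α) * bW α n (i+1) + α * bW α n i := by
  unfold bW
  rcases lt_trichotomy i n with h | rfl | h
  · rw [Nat.choose_succ_succ]
    push_cast
    rw [show n - i = (n - (i+1)) + 1 from by omega]
    ring
  · rw [Nat.choose_self, Nat.choose_succ_self, Nat.choose_self]
    push_cast
    simp only [Nat.sub_self, Nat.add_sub_cancel_left]
    norm_num
    ring
  · rw [Nat.choose_eq_zero_of_lt (by omega), Nat.choose_eq_zero_of_lt (by omega),
      Nat.choose_eq_zero_of_lt (by omega)]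
    norm_num

lemma bW_pascal_zero (α : ℝ) (n : ℕ) : bW α (n+1) 0 = (1-α) * bW α n 0 := by
  simp [bW, pow_succ]; ring


lemma sum_sq_shift (α : ℝ) (n : ℕ) :
    ∑ i ∈ range (n+1), bW α n (i+1) ^ 2 = eD α n - bW α n 0 ^ 2 := by
  have h1 : ∑ i ∈ range (n+2), bW α n i ^ 2
      = (∑ i ∈ range (n+1), bW α n (i+1) ^ 2) + bW α n 0 ^ 2 :=
    Finset.sum_range_succ' _ _
  have h2 : ∑ i ∈ range (n+2), bW α n i ^ 2 = eD α n := by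
    rw [Finset.sum_range_succ, bW_big α (by omega : n < n+1)]
    simp [eD]
  linarith

lemma sum_mix_shift (α : ℝ) (n : ℕ) :
    ∑ i ∈ range (n+1), bW α n (i+1) * bW α n (i+2)
      = aOne α n - bW α n 0 * bW α n 1 := by
  have h1 : ∑ i ∈ range (n+2), bW α n i * bW α n (i+1)
      = (∑ i ∈ range (n+1), bW α n (i+1) * bW α n (i+2)) + bW α n 0 * bW α n 1 :=
    Finset.sum_range_succ' _ _
  have h2 : ∑ i ∈ range (n+2), bW α n i * bW α n (i+1) = aOne α n := by
    rw [Finset.sum_range_succ, bW_big α (by omega : n < n+1)]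
    simp [aOne]
  linarith

lemma sum_sq_shift2 (α : ℝ) (n : ℕ) :
    ∑ i ∈ range (n+1), bW α n (i+2) ^ 2 = eD α n - bW α n 0 ^ 2 - bW α n 1 ^ 2 := by
  have h1 : ∑ i ∈ range (n+3), bW α n i ^ 2
      = (∑ i ∈ range (n+2), bW α n (i+1) ^ 2) + bW α n 0 ^ 2 :=
    Finset.sum_range_succ' _ _
  have h2 : ∑ i ∈ range (n+2), bW α n (i+1) ^ 2
      = (∑ i ∈ range (n+1), bW α n (i+2) ^ 2) + bW α n 1 ^ 2 :=
    Finset.sum_range_succ' _ _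
  have h3 : ∑ i ∈ range (n+3), bW α n i ^ 2 = eD α n := by
    rw [Finset.sum_range_succ, Finset.sum_range_succ,
      bW_big α (by omega : n < n+1), bW_big α (by omega : n < n+2)]
    simp [eD]
  linarith

lemma eD_succ (α : ℝ) (n : ℕ) :
    eD α (n+1) = ((1-α)^2 + α^2) * eD α n + 2*α*(1-α) * aOne α n := by
  have h0 : eD α (n+1) = (∑ i ∈ range (n+1), bW α (n+1) (i+1) ^ 2) + bW α (n+1) 0 ^ 2 :=
    Finset.sum_range_succ' _ _
  have h1 : ∀ i ∈ range (n+1), bW α (n+1) (i+1) ^ 2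
      = (1-α)^2 * bW α n (i+1)^2 + 2*α*(1-α) * (bW α n i * bW α n (i+1)) + α^2 * bW α n i ^2 :=
    fun i _ => by rw [bW_pascal]; ring
  rw [h0, Finset.sum_congr rfl h1, Finset.sum_add_distrib, Finset.sum_add_distrib,
    ← Finset.mul_sum, ← Finset.mul_sum, ← Finset.mul_sum, sum_sq_shift, bW_pascal_zero]
  have : ∑ i ∈ range (n+1), bW α n i ^ 2 = eD α n := rfl
  rw [this]
  have : ∑ i ∈ range (n+1), bW α n i * bW α n (i+1) = aOne α n := rfl
  rw [this]
  ring

lemma aOne_succ (α : ℝ) (n : ℕ) :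
    aOne α (n+1) = ((1-α)^2 + α^2) * aOne α n + α*(1-α) * (eD α n + aTwo α n) := by
  have h0 : aOne α (n+1)
      = (∑ i ∈ range (n+1), bW α (n+1) (i+1) * bW α (n+1) (i+2)) + bW α (n+1) 0 * bW α (n+1) 1 :=
    Finset.sum_range_succ' _ _
  have h1 : ∀ i ∈ range (n+1), bW α (n+1) (i+1) * bW α (n+1) (i+2)
      = (1-α)^2 * (bW α n (i+1) * bW α n (i+2)) + α*(1-α) * bW α n (i+1)^2
        + α*(1-α) * (bW α n i * bW α n (i+2)) + α^2 * (bW α n i * bW α n (i+1)) :=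
    fun i _ => by rw [bW_pascal, bW_pascal]; ring
  rw [h0, Finset.sum_congr rfl h1, Finset.sum_add_distrib, Finset.sum_add_distrib,
    Finset.sum_add_distrib, ← Finset.mul_sum, ← Finset.mul_sum, ← Finset.mul_sum,
    ← Finset.mul_sum, sum_mix_shift, sum_sq_shift, bW_pascal_zero,
    show bW α (n+1) 1 = (1-α) * bW α n 1 + α * bW α n 0 from bW_pascal α n 0]
  have h2 : ∑ i ∈ range (n+1), bW α n i * bW α n (i+2) = aTwo α n := rfl
  have h3 : ∑ i ∈ range (n+1), bW α n i * bW α n (i+1) = aOne α n := rfl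
  rw [h2, h3]
  ring


lemma bW_zero_pos {α : ℝ} (hα1 : α < 1) (n : ℕ) : 0 < bW α n 0 := by
  rw [bW_zero]; exact pow_pos (by linarith) n

lemma aOne_lt_eD {α : ℝ} (hα1 : α < 1) (n : ℕ) : aOne α n < eD α n := by
  have key : ∑ i ∈ range (n+1), (bW α n i - bW α n (i+1))^2
      = eD α n - 2 * aOne α n + (eD α n - bW α n 0 ^ 2) := by
    have h1 : ∀ i ∈ range (n+1), (bW α n i - bW α n (i+1))^2
        = bW α n i ^ 2 - 2 * (bW α n i * bW α n (i+1)) + bW α n (i+1)^2 :=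
      fun i _ => by ring
    rw [Finset.sum_congr rfl h1, Finset.sum_add_distrib, Finset.sum_sub_distrib,
      ← Finset.mul_sum, sum_sq_shift]
    rfl
  have hs : 0 ≤ ∑ i ∈ range (n+1), (bW α n i - bW α n (i+1))^2 :=
    Finset.sum_nonneg fun i _ => sq_nonneg _
  nlinarith [bW_zero_pos hα1 n]

lemma convex_comb_pos {α : ℝ} (hα1 : α < 1) (n : ℕ) :
    0 < 3 * eD α n - 4 * aOne α n + aTwo α n := by
  have key : ∑ i ∈ range (n+1), (bW α n i - 2 * bW α n (i+1) + bW α n (i+2))^2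
      = eD α n + 4 * (eD α n - bW α n 0 ^ 2)
        + (eD α n - bW α n 0 ^ 2 - bW α n 1 ^ 2)
        - 4 * aOne α n - 4 * (aOne α n - bW α n 0 * bW α n 1) + 2 * aTwo α n := by
    have h1 : ∀ i ∈ range (n+1), (bW α n i - 2 * bW α n (i+1) + bW α n (i+2))^2
        = bW α n i ^ 2 + 4 * bW α n (i+1)^2 + bW α n (i+2)^2
          - 4 * (bW α n i * bW α n (i+1)) - 4 * (bW α n (i+1) * bW α n (i+2))
          + 2 * (bW α n i * bW α n (i+2)) :=
      fun i _ => by ring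
    rw [Finset.sum_congr rfl h1, Finset.sum_add_distrib, Finset.sum_sub_distrib,
      Finset.sum_sub_distrib, Finset.sum_add_distrib, Finset.sum_add_distrib,
      ← Finset.mul_sum, ← Finset.mul_sum, ← Finset.mul_sum, ← Finset.mul_sum,
      sum_sq_shift, sum_sq_shift2, sum_mix_shift]
    rfl
  have hs : 0 ≤ ∑ i ∈ range (n+1), (bW α n i - 2 * bW α n (i+1) + bW α n (i+2))^2 :=
    Finset.sum_nonneg fun i _ => sq_nonneg _
  nlinarith [bW_zero_pos hα1 n, sq_nonneg (2 * bW α n 0 - bW α n 1)]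


lemma tri_swap (g : ℕ → ℝ) (N : ℕ) :
    ∑ i ∈ range N, ∑ j ∈ range i, g i * g j
      = ∑ i ∈ range N, ∑ j ∈ Ico (i+1) N, g i * g j := by
  induction N with
  | zero => simp
  | succ N ih =>
    rw [Finset.sum_range_succ, Finset.sum_range_succ (fun i => ∑ j ∈ Ico (i+1) (N+1), g i * g j)]
    have h1 : ∀ i ∈ range N, ∑ j ∈ Ico (i+1) (N+1), g i * g j
        = (∑ j ∈ Ico (i+1) N, g i * g j) + g i * g N := by
      intro i hi
      exact Finset.sum_Ico_succ_top (by simp at hi; omega) _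
    rw [Finset.sum_congr rfl h1, Finset.sum_add_distrib, ← ih]
    simp [mul_comm]

lemma two_uU (α : ℝ) (n : ℕ) : 2 * uU α n + eD α n = 1 := by
  have h0 : (1:ℝ) = ∑ i ∈ range (n+1), ∑ j ∈ range (n+1), bW α n i * bW α n j := by
    rw [← Finset.sum_mul_sum (range (n+1)) (range (n+1)) (bW α n) (bW α n),
      sum_bW]; norm_num
  have h1 : ∀ i ∈ range (n+1), ∑ j ∈ range (n+1), bW α n i * bW α n j
      = (∑ j ∈ range i, bW α n i * bW α n j)
        + (bW α n i ^ 2 + ∑ j ∈ Icc (i+1) n, bW α n i * bW α n j) := by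
    intro i hi
    simp only [Finset.mem_range] at hi
    rw [Finset.range_eq_Ico, ← Finset.sum_Ico_consecutive _ (Nat.zero_le i) (by omega : i ≤ n+1),
      Finset.sum_eq_sum_Ico_succ_bot (by omega : i < n+1), ← Finset.range_eq_Ico,
      Finset.Ico_add_one_right_eq_Icc]
    ring
  rw [Finset.sum_congr rfl h1, Finset.sum_add_distrib, Finset.sum_add_distrib] at h0
  have h2 := tri_swap (bW α n) (n+1)
  have h3 : ∀ i ∈ range (n+1), ∑ j ∈ Ico (i+1) (n+1), bW α n i * bW α n j
      = ∑ j ∈ Icc (i+1) n, bW α n i * bW α n j := by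
    intro i _; rw [Finset.Ico_add_one_right_eq_Icc]
  rw [h2, Finset.sum_congr rfl h3] at h0
  have : eD α n = ∑ i ∈ range (n+1), bW α n i ^ 2 := rfl
  rw [this]
  have : uU α n = ∑ i ∈ range (n+1), ∑ j ∈ Icc (i+1) n, bW α n i * bW α n j := rfl
  rw [this]
  linarith

lemma term_eq (α : ℝ) {n i k : ℕ} (hi : i ≤ n) (hk : k ≤ n) :
    ((n+1).choose (k+1) : ℝ) * (n.choose i) * α^(i+(k+1)) * (1-α)^(2*n+1-i-(k+1))
      = α * (bW α n i * bW α n k) + (1-α) * (bW α n i * bW α n (k+1)) := by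
  rw [Nat.choose_succ_succ]
  push_cast
  unfold bW
  rcases eq_or_lt_of_le hk with rfl | hk'
  · rw [Nat.choose_succ_self]
    push_cast
    rw [show 2*k+1-i-(k+1) = k - i from by omega,
      show i+(k+1) = (i+k)+1 from by omega, pow_succ, pow_add, Nat.sub_self, pow_zero]
    ring
  · rw [show 2*n+1-i-(k+1) = (n-i) + (n-k) from by omega,
      show n - k = (n-(k+1)) + 1 from by omega,
      show i+(k+1) = (i+k)+1 from by omega, pow_succ, pow_add, pow_add, pow_succ]
    ring

lemma competeProb_eq (α : ℝ) (n : ℕ) :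
    competeProb α 1 1 n = uU α n + α * eD α n := by
  unfold competeProb
  have hre : ∀ i ∈ range (n+1),
      ∑ j ∈ Icc (i+1) (n+1), ((n+1).choose j : ℝ) * (n.choose i) * α^(i+j) * (1-α)^(2*n+1-i-j)
        = ∑ k ∈ Icc i n, (((n+1).choose (k+1) : ℝ) * (n.choose i) * α^(i+(k+1)) * (1-α)^(2*n+1-i-(k+1))) := by
    intro i _
    rw [← Finset.map_add_right_Icc i n 1, Finset.sum_map]
    simp [addRightEmbedding]
  rw [Finset.sum_congr rfl hre]
  have hter : ∀ i ∈ range (n+1),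
      ∑ k ∈ Icc i n, (((n+1).choose (k+1) : ℝ) * (n.choose i) * α^(i+(k+1)) * (1-α)^(2*n+1-i-(k+1)))
        = α * bW α n i ^ 2 + (∑ k ∈ Icc (i+1) n, α * (bW α n i * bW α n k))
          + ∑ j ∈ Icc (i+1) n, (1-α) * (bW α n i * bW α n j) + (1-α) * (bW α n i * bW α n (n+1)) := by
    intro i hi
    simp only [Finset.mem_range] at hi
    have step1 : ∀ k ∈ Icc i n,
        (((n+1).choose (k+1) : ℝ) * (n.choose i) * α^(i+(k+1)) * (1-α)^(2*n+1-i-(k+1)))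
          = α * (bW α n i * bW α n k) + (1-α) * (bW α n i * bW α n (k+1)) := by
      intro k hk
      simp only [Finset.mem_Icc] at hk
      exact term_eq α (by omega) hk.2
    have p1 : ∑ k ∈ Icc i n, α * (bW α n i * bW α n k)
        = α * bW α n i ^ 2 + ∑ k ∈ Icc (i+1) n, α * (bW α n i * bW α n k) := by
      rw [← Finset.Ico_add_one_right_eq_Icc i n, Finset.sum_eq_sum_Ico_succ_bot (by omega : i < n+1),
        Finset.Ico_add_one_right_eq_Icc]
      congr 1
      ring
    have p2 : ∑ k ∈ Icc i n, (1-α) * (bW α n i * bW α n (k+1))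
        = (∑ j ∈ Icc (i+1) n, (1-α) * (bW α n i * bW α n j)) + (1-α) * (bW α n i * bW α n (n+1)) := by
      have hmp : ∑ k ∈ Icc i n, (1-α) * (bW α n i * bW α n (k+1))
          = ∑ j ∈ Icc (i+1) (n+1), (1-α) * (bW α n i * bW α n j) := by
        rw [← Finset.map_add_right_Icc i n 1, Finset.sum_map]
        simp [addRightEmbedding]
      rw [hmp, Finset.sum_Icc_succ_top (by omega : i+1 ≤ n+1)]
    rw [Finset.sum_congr rfl step1, Finset.sum_add_distrib, p1, p2]
    ring
  rw [Finset.sum_congr rfl hter]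
  simp only [bW_big α (by omega : n < n+1), mul_zero, add_zero]
  rw [Finset.sum_add_distrib, Finset.sum_add_distrib]
  have e1 : ∑ i ∈ range (n+1), α * bW α n i ^ 2 = α * eD α n := by
    rw [← Finset.mul_sum]; rfl
  have e2 : ∀ i ∈ range (n+1), ∑ k ∈ Icc (i+1) n, α * (bW α n i * bW α n k)
      = α * ∑ k ∈ Icc (i+1) n, bW α n i * bW α n k := fun i _ => by rw [Finset.mul_sum]
  have e3 : ∀ i ∈ range (n+1), ∑ j ∈ Icc (i+1) n, (1-α) * (bW α n i * bW α n j)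
      = (1-α) * ∑ j ∈ Icc (i+1) n, bW α n i * bW α n j := fun i _ => by rw [Finset.mul_sum]
  rw [Finset.sum_congr rfl e2, Finset.sum_congr rfl e3, ← Finset.mul_sum, ← Finset.mul_sum,
    ← Finset.mul_sum]
  have hu : uU α n = ∑ i ∈ range (n+1), ∑ j ∈ Icc (i+1) n, bW α n i * bW α n j := rfl
  have he : eD α n = ∑ i ∈ range (n+1), bW α n i ^ 2 := rfl
  rw [hu, he]
  ring

end CPAux

theorem competeProb_increasing_concave_of_lt_half (α : ℝ) (hα0 : 0 < α) (hα : α < 1 / 2) :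
    (∀ n : ℕ, competeProb α 1 1 n < competeProb α 1 1 (n + 1)) ∧
    (∀ n : ℕ, competeProb α 1 1 (n + 2) - competeProb α 1 1 (n + 1) <
      competeProb α 1 1 (n + 1) - competeProb α 1 1 n) := by
  have hα1 : α < 1 := by linarith
  have key : ∀ n, competeProb α 1 1 n = 1/2 - (1/2 - α) * CPAux.eD α n := by
    intro n
    have h1 := CPAux.competeProb_eq α n
    have h2 := CPAux.two_uU α n
    linear_combination h1 + (1/2) * h2
  have hd1 : ∀ n, CPAux.eD α (n+1) - CPAux.eD α n
      = 2*(α*(1-α)) * (CPAux.aOne α n - CPAux.eD α n) := by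
    intro n; rw [CPAux.eD_succ]; ring
  have hd2 : ∀ n, CPAux.eD α (n+2) - 2*CPAux.eD α (n+1) + CPAux.eD α n
      = 2*(α*(1-α))^2 * (3*CPAux.eD α n - 4*CPAux.aOne α n + CPAux.aTwo α n) := by
    intro n
    rw [show n+2 = (n+1)+1 from rfl, CPAux.eD_succ α (n+1), CPAux.aOne_succ α n,
      CPAux.eD_succ α n]
    ring
  have hβ : 0 < α * (1-α) := mul_pos hα0 (by linarith)
  have hc : 0 < 1/2 - α := by linarith
  constructor
  · intro n
    rw [key n, key (n+1)]
    have h5 := CPAux.aOne_lt_eD hα1 n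
    have hdd := hd1 n
    nlinarith [mul_pos hβ (sub_pos.2 h5)]
  · intro n
    rw [key n, key (n+1), key (n+2)]
    have h6 := CPAux.convex_comb_pos hα1 n
    have hdd := hd2 n
    nlinarith [mul_pos (mul_pos hβ hβ) h6]
end

section
/- If 1/2 < α < 1, then the sequence p_n := p_n^{1,1} = P(S_{n+1} > S'_n), n = 0, 1, 2, …, is strictly decreasing and strictly convex, i.e. p_{n+1} < p_n for all n and p_{n+2} − p_{n+1} > p_{n+1} − p_n for all n. -/
open Finset Filter Topology

namespace CompeteAux

open Polynomial

/-! ### Auxiliary polynomial setup -/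

noncomputable def uP (α : ℝ) : ℝ[X] := C α * X + C (1 - α)
noncomputable def vP (α : ℝ) : ℝ[X] := C (1 - α) * X + C α
noncomputable def Pn (α : ℝ) (n : ℕ) : ℝ[X] := uP α ^ (n + 1) * vP α ^ n
noncomputable def Tn (α : ℝ) (n : ℕ) : ℝ := ∑ t ∈ range (n + 1), (Pn α n).coeff (n + 1 + t)

lemma coeff_linear_pow (a b : ℝ) (m k : ℕ) (h : k ≤ m) :
    ((C a * X + C b) ^ m).coeff k = (m.choose k : ℝ) * a ^ k * b ^ (m - k) := by
  rw [add_pow, finset_sum_coeff]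
  rw [Finset.sum_congr rfl (g := fun i => if i = k then (m.choose k : ℝ) * a ^ k * b ^ (m - k) else 0)
    (fun i hi => ?_), Finset.sum_ite_eq' (range (m+1)) k _]
  · simp [Nat.lt_succ_of_le h, h]
  · have e : (C a * X) ^ i * C b ^ (m - i) * (m.choose i : ℝ[X])
        = C (a ^ i * b ^ (m-i) * (m.choose i : ℝ)) * X ^ i := by
      push_cast [← C_eq_natCast]
      rw [mul_pow, ← C_pow, ← C_pow, C_mul, C_mul]
      ring
    rw [e, coeff_C_mul, coeff_X_pow]
    by_cases hik : i = k
    · subst hik; simp [mul_comm, mul_assoc, mul_left_comm]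
    · simp [hik, Ne.symm hik]

lemma natDegree_linear_pow_le (a b : ℝ) (m : ℕ) :
    ((C a * X + C b) ^ m).natDegree ≤ m := by
  calc ((C a * X + C b) ^ m).natDegree ≤ m * (C a * X + C b).natDegree :=
        natDegree_pow_le
    _ ≤ m * 1 := Nat.mul_le_mul_left m (natDegree_linear_le)
    _ = m := mul_one m

lemma coeff_linear_pow_zero (a b : ℝ) (m k : ℕ) (h : m < k) :
    ((C a * X + C b) ^ m).coeff k = 0 :=
  coeff_eq_zero_of_natDegree_lt (lt_of_le_of_lt (natDegree_linear_pow_le a b m) h)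

lemma reflect_linear (a b : ℝ) : reflect 1 (C a * X + C b) = C b * X + C a := by
  have h1 : (C a * X : ℝ[X]) = C a * X ^ 1 := by ring
  have h2 : (C b : ℝ[X]) = C b * X ^ 0 := by ring
  rw [reflect_add, h1, h2, reflect_C_mul_X_pow, reflect_C_mul_X_pow]
  simp [revAt_le]
  ring

lemma reflect_linear_pow (a b : ℝ) (m : ℕ) :
    reflect m ((C a * X + C b) ^ m) = (C b * X + C a) ^ m := by
  induction m with
  | zero => simpa using reflect_one 0
  | succ n ih =>
    have : ((C a * X + C b) ^ (n+1)) = (C a * X + C b) ^ n * (C a * X + C b) := by ring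
    rw [this, reflect_mul _ _ (natDegree_linear_pow_le a b n) natDegree_linear_le, ih,
      reflect_linear]
    ring

lemma reflect_one_sub_X : reflect 1 (1 - X : ℝ[X]) = X - 1 := by
  have : (1 - X : ℝ[X]) = C (-1) * X + C 1 := by simp; ring
  rw [this, reflect_linear]
  simp
  ring

lemma central_coeff_sq (q : ℝ[X]) (N : ℕ) :
    (q * reflect N q).coeff N = ∑ i ∈ range (N + 1), (q.coeff i) ^ 2 := by
  rw [coeff_mul, Finset.Nat.sum_antidiagonal_eq_sum_range_succ_mk]
  refine Finset.sum_congr rfl fun i hi => ?_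
  rw [coeff_reflect, revAt_le (Nat.sub_le N i),
    Nat.sub_sub_self (Nat.lt_succ_iff.mp (mem_range.mp hi)), sq]

lemma one_sub_X_eq : (1 - X : ℝ[X]) = C (-1) * X + C 1 := by
  simp only [map_neg, map_one]; ring

lemma natDegree_one_sub_X_le : (1 - X : ℝ[X]).natDegree ≤ 1 := by
  rw [one_sub_X_eq]; exact natDegree_linear_le

lemma natDegree_one_sub_X_pow_le (m : ℕ) : ((1 - X : ℝ[X]) ^ m).natDegree ≤ m := by
  rw [one_sub_X_eq]; exact natDegree_linear_pow_le _ _ m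

lemma natDegree_uP_pow_le (α : ℝ) (m : ℕ) : (uP α ^ m).natDegree ≤ m :=
  natDegree_linear_pow_le _ _ m

lemma natDegree_vP_pow_le (α : ℝ) (m : ℕ) : (vP α ^ m).natDegree ≤ m :=
  natDegree_linear_pow_le _ _ m

lemma reflect_one_sub_X_sq : reflect 2 ((1 - X : ℝ[X]) ^ 2) = (1 - X) ^ 2 := by
  rw [sq, show (2:ℕ) = 1 + 1 from rfl,
    reflect_mul _ _ natDegree_one_sub_X_le natDegree_one_sub_X_le, reflect_one_sub_X]
  ring

lemma reflect_one_sub_X_cube : reflect 3 ((1 - X : ℝ[X]) ^ 3) = -((1 - X) ^ 3) := by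
  rw [show ((1-X:ℝ[X]))^3 = (1-X)^2 * (1-X) by ring, show (3:ℕ) = 2 + 1 from rfl,
    reflect_mul _ _ (natDegree_one_sub_X_pow_le 2) natDegree_one_sub_X_le,
    reflect_one_sub_X_sq, reflect_one_sub_X]
  ring

lemma reflect_uP_pow (α : ℝ) (m : ℕ) : reflect m (uP α ^ m) = vP α ^ m :=
  reflect_linear_pow α (1-α) m

lemma reflect_A1 (α : ℝ) (n : ℕ) :
    reflect (n + 1) (uP α ^ n * (1 - X)) = vP α ^ n * (X - 1) := by
  rw [uP, reflect_mul _ _ (natDegree_linear_pow_le _ _ n) natDegree_one_sub_X_le,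
    reflect_linear_pow, reflect_one_sub_X, ← vP]

lemma reflect_A2 (α : ℝ) (n : ℕ) :
    reflect (n + 2) (uP α ^ n * (1 - X) ^ 2) = vP α ^ n * (1 - X) ^ 2 := by
  rw [uP, reflect_mul _ _ (natDegree_linear_pow_le _ _ n) (natDegree_one_sub_X_pow_le 2),
    reflect_linear_pow, reflect_one_sub_X_sq, ← vP]

lemma reflect_v1 (α : ℝ) (n : ℕ) :
    reflect (n + 1) (vP α ^ n * (1 - X)) = uP α ^ n * (X - 1) := by
  rw [vP, reflect_mul _ _ (natDegree_linear_pow_le _ _ n) natDegree_one_sub_X_le,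
    reflect_linear_pow, reflect_one_sub_X, ← uP]

lemma reflect_v3 (α : ℝ) (n : ℕ) :
    reflect (n + 3) (vP α ^ n * (1 - X) ^ 3) = uP α ^ n * -((1 - X) ^ 3) := by
  rw [vP, reflect_mul _ _ (natDegree_linear_pow_le _ _ n) (natDegree_one_sub_X_pow_le 3),
    reflect_linear_pow, reflect_one_sub_X_cube, ← uP]

/-! ### The bridge from `competeProb` to coefficient tail sums -/

lemma coeff_Pn_split (α : ℝ) (n k : ℕ) (hk : n + 1 ≤ k) :
    (Pn α n).coeff k
      = ∑ m ∈ range (n + 1), (vP α ^ n).coeff m * (uP α ^ (n+1)).coeff (k - m) := by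
  rw [Pn, mul_comm, coeff_mul, Finset.Nat.sum_antidiagonal_eq_sum_range_succ_mk]
  rw [← Finset.sum_subset (Finset.range_subset_range.mpr (by omega : n + 1 ≤ k + 1))]
  intro x hx hx'
  rw [vP, coeff_linear_pow_zero _ _ n x (by simp at hx' ⊢ ; omega), zero_mul]

lemma competeProb_eq_Tn (α : ℝ) (n : ℕ) : competeProb α 1 1 n = Tn α n := by
  have huc : ∀ j, j ≤ n + 1 → (uP α ^ (n+1)).coeff j
      = ((n+1).choose j : ℝ) * α ^ j * (1-α) ^ (n+1-j) := fun j hj => by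
    rw [uP, coeff_linear_pow _ _ _ _ hj]
  have hvc : ∀ i, i ≤ n → (vP α ^ n).coeff (n - i)
      = (n.choose i : ℝ) * (1-α) ^ (n-i) * α ^ i := fun i hi => by
    rw [vP, coeff_linear_pow _ _ _ _ (Nat.sub_le n i), Nat.choose_symm hi, Nat.sub_sub_self hi]
  have h1 : ∀ t ∈ range (n+1), (Pn α n).coeff (n + 1 + t)
      = ∑ m ∈ range (n + 1), (vP α ^ n).coeff m * (uP α ^ (n+1)).coeff (n + 1 + t - m) :=
    fun t _ => coeff_Pn_split α n _ (by omega)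
  have step1 : Tn α n
      = ∑ m ∈ range (n+1), ∑ t ∈ range (n+1),
          (vP α ^ n).coeff m * (uP α ^ (n+1)).coeff (n+1+t-m) := by
    rw [Tn, Finset.sum_congr rfl h1, Finset.sum_comm]
  have refl' := Finset.sum_range_reflect (fun m => ∑ t ∈ range (n+1),
      (vP α ^ n).coeff m * (uP α ^ (n+1)).coeff (n+1+t-m)) (n+1)
  simp only [Nat.add_sub_cancel] at refl'
  have step2 : Tn α n
      = ∑ i ∈ range (n+1), ∑ t ∈ range (n+1),
          (vP α ^ n).coeff (n-i) * (uP α ^ (n+1)).coeff (n+1+t-(n-i)) := by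
    rw [step1, ← refl']
  rw [step2, competeProb]
  refine Finset.sum_congr rfl fun i hi => ?_
  have hi' : i ≤ n := by simp at hi; omega
  have harg : ∀ t : ℕ, n + 1 + t - (n - i) = i + 1 + t := fun t => by omega
  simp only [harg]
  have htrim : ∑ t ∈ range (n+1),
        (vP α ^ n).coeff (n-i) * (uP α ^ (n+1)).coeff (i + 1 + t)
      = ∑ t ∈ range (n+1-i),
        (vP α ^ n).coeff (n-i) * (uP α ^ (n+1)).coeff (i + 1 + t) := by
    rw [← Finset.sum_subset (Finset.range_subset_range.mpr (by omega : n+1-i ≤ n+1))]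
    intro x hx hx'
    rw [uP, coeff_linear_pow_zero _ _ (n+1) _ (by simp at hx' ⊢ ; omega), mul_zero]
  rw [htrim]
  have hIcc : Finset.Icc (i+1) (n+1) = Finset.Ico (i+1) (n+2) := by
    exact (Finset.Ico_add_one_right_eq_Icc (i+1) (n+1)).symm
  rw [hIcc, Finset.sum_Ico_eq_sum_range]
  have hn : n + 2 - (i + 1) = n + 1 - i := by omega
  rw [hn]
  refine Finset.sum_congr rfl fun t ht => ?_
  have ht' : t < n + 1 - i := by simpa using ht
  rw [huc (i+1+t) (by omega), hvc i hi']
  have hexp : 2*n+1 - i - (i+1+t) = (n-i) + (n+1-(i+1+t)) := by omega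
  rw [hexp, pow_add, pow_add]
  ring

/-! ### The basic recurrence for the tail sums -/

lemma uv_expand (α : ℝ) : uP α * vP α
    = C (α * (1-α)) * X^2 + C (α^2 + (1-α)^2) * X + C (α * (1-α)) := by
  simp only [uP, vP, C_mul, C_add, C_pow]
  ring

lemma coeff_mul_uv (α : ℝ) (q : ℝ[X]) (k : ℕ) :
    (q * (uP α * vP α)).coeff (k + 2)
      = α*(1-α) * q.coeff k + (α^2 + (1-α)^2) * q.coeff (k+1)
        + α*(1-α) * q.coeff (k+2) := by
  rw [uv_expand, mul_add, mul_add, coeff_add, coeff_add]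
  have h2 : (q * (C (α * (1-α)) * X^2)).coeff (k+2) = α*(1-α) * q.coeff k := by
    rw [show q * (C (α * (1-α)) * X^2) = q * C (α * (1-α)) * X^2 by ring,
      coeff_mul_X_pow', if_pos (by omega), coeff_mul_C]
    simp [mul_comm]
  have h1 : (q * (C (α^2 + (1-α)^2) * X)).coeff (k+2) = (α^2 + (1-α)^2) * q.coeff (k+1) := by
    rw [show q * (C (α^2 + (1-α)^2) * X) = q * C (α^2 + (1-α)^2) * X^1 by ring,
      coeff_mul_X_pow', if_pos (by omega), coeff_mul_C]
    simp [mul_comm]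
  have h0 : (q * C (α * (1-α))).coeff (k+2) = α*(1-α) * q.coeff (k+2) := by
    rw [coeff_mul_C]; ring
  rw [h2, h1, h0]

lemma natDegree_Pn_le (α : ℝ) (n : ℕ) : (Pn α n).natDegree ≤ 2*n+1 :=
  le_trans natDegree_mul_le
    (by have h1 := natDegree_uP_pow_le α (n+1); have h2 := natDegree_vP_pow_le α n; omega)

lemma coeff_Pn_zero (α : ℝ) (n k : ℕ) (h : 2*n+1 < k) : (Pn α n).coeff k = 0 :=
  coeff_eq_zero_of_natDegree_lt (lt_of_le_of_lt (natDegree_Pn_le α n) h)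

lemma Pn_succ (α : ℝ) (n : ℕ) : Pn α (n+1) = Pn α n * (uP α * vP α) := by
  simp only [Pn]; ring

lemma Tn_succ (α : ℝ) (n : ℕ) :
    Tn α (n+1) = Tn α n + α*(1-α) * ((Pn α n).coeff n - (Pn α n).coeff (n+1)) := by
  have key : ∀ t : ℕ, (Pn α (n+1)).coeff (n + 2 + t)
      = α*(1-α) * (Pn α n).coeff (n+t) + (α^2 + (1-α)^2) * (Pn α n).coeff (n+1+t)
        + α*(1-α) * (Pn α n).coeff (n+2+t) := by
    intro t
    rw [Pn_succ, show n + 2 + t = (n + t) + 2 by ring, coeff_mul_uv]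
    norm_num [show n + t + 1 = n + 1 + t by ring, show n + t + 2 = n + 2 + t by ring]
  have hT : Tn α (n+1) = ∑ t ∈ range (n+2), (Pn α (n+1)).coeff (n+2+t) := by
    rw [Tn]
  rw [hT, Finset.sum_congr rfl (fun t _ => key t)]
  rw [Finset.sum_add_distrib, Finset.sum_add_distrib, ← Finset.mul_sum, ← Finset.mul_sum,
    ← Finset.mul_sum]
  have s1 : ∑ t ∈ range (n+2), (Pn α n).coeff (n+t) = (Pn α n).coeff n + Tn α n := by
    have e := Finset.sum_range_succ' (fun t => (Pn α n).coeff (n+t)) (n+1)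
    simp only [Nat.add_zero] at e
    rw [e]
    have e2 : (∑ t ∈ range (n+1), (Pn α n).coeff (n+(t+1))) = Tn α n := by
      rw [Tn]
      exact Finset.sum_congr rfl (fun t _ => by rw [show n+(t+1) = n+1+t by ring])
    rw [e2]
    ring
  have s2 : ∑ t ∈ range (n+2), (Pn α n).coeff (n+1+t) = Tn α n := by
    rw [Finset.sum_range_succ, Tn, coeff_Pn_zero α n _ (by omega)]
    ring
  have s3 : ∑ t ∈ range (n+2), (Pn α n).coeff (n+2+t) = Tn α n - (Pn α n).coeff (n+1) := by
    rw [Finset.sum_range_succ, Finset.sum_range_succ,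
      coeff_Pn_zero α n (n+2+n) (by omega), coeff_Pn_zero α n (n+2+(n+1)) (by omega)]
    have h := Finset.sum_range_succ' (fun t => (Pn α n).coeff (n+1+t)) n
    simp only [Nat.add_zero] at h
    have h2 : (∑ t ∈ range n, (Pn α n).coeff (n+1+(t+1)))
        = ∑ t ∈ range n, (Pn α n).coeff (n+2+t) :=
      Finset.sum_congr rfl (fun t _ => by rw [show n+1+(t+1) = n+2+t by ring])
    rw [h2] at h
    have hTn : Tn α n = ∑ t ∈ range (n+1), (Pn α n).coeff (n+1+t) := rfl
    rw [hTn, h]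
    ring
  rw [s1, s2, s3]
  ring

/-! ### Central coefficients as sums of squares -/

lemma sq_sum_first (α : ℝ) (n : ℕ) :
    2 * (Pn α n * (1 - X)).coeff (n + 1)
      = (2*α - 1) * ∑ i ∈ range (n + 2), ((uP α ^ n * (1 - X)).coeff i) ^ 2 := by
  have h1 : reflect ((n+1) + (n+1)) (uP α ^ (n+1) * (vP α ^ n * (1 - X)))
      = vP α ^ (n+1) * (uP α ^ n * (X - 1)) := by
    rw [reflect_mul _ _ (natDegree_uP_pow_le α (n+1))
        (le_trans natDegree_mul_le (add_le_add (natDegree_vP_pow_le α n) natDegree_one_sub_X_le)),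
      reflect_uP_pow, reflect_v1]
  have h2 : (Pn α n * (1 - X)).coeff (n+1)
      = (vP α ^ (n+1) * (uP α ^ n * (X - 1))).coeff (n+1) := by
    rw [← h1, coeff_reflect, revAt_le (by omega : n + 1 ≤ (n+1)+(n+1)),
      show (n+1)+(n+1) - (n+1) = n+1 by omega]
    congr 1
    rw [Pn]; ring
  have hring : Pn α n * (1 - X) + vP α ^ (n+1) * (uP α ^ n * (X - 1))
      = C (2*α - 1) * ((uP α ^ n * (1 - X)) * (vP α ^ n * (X - 1))) := by
    simp only [Pn, uP, vP, map_sub, map_mul, map_add, map_one, map_ofNat]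
    ring
  have hh : 2 * (Pn α n * (1 - X)).coeff (n+1)
      = (Pn α n * (1 - X) + vP α ^ (n+1) * (uP α ^ n * (X - 1))).coeff (n+1) := by
    rw [coeff_add, ← h2]; ring
  rw [hh, hring, ← reflect_A1, coeff_C_mul, central_coeff_sq]

lemma sq_sum_second (α : ℝ) (n : ℕ) :
    2 * (Pn α n * (1 - X) ^ 3).coeff (n + 2)
      = -(2*α - 1) * ∑ i ∈ range (n + 3), ((uP α ^ n * (1 - X) ^ 2).coeff i) ^ 2 := by
  have h1 : reflect ((n+1) + (n+3)) (uP α ^ (n+1) * (vP α ^ n * (1 - X) ^ 3))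
      = vP α ^ (n+1) * (uP α ^ n * -((1 - X) ^ 3)) := by
    rw [reflect_mul _ _ (natDegree_uP_pow_le α (n+1))
        (le_trans natDegree_mul_le (add_le_add (natDegree_vP_pow_le α n)
          (natDegree_one_sub_X_pow_le 3))),
      reflect_uP_pow, reflect_v3]
  have h2 : (Pn α n * (1 - X) ^ 3).coeff (n+2)
      = (vP α ^ (n+1) * (uP α ^ n * -((1 - X) ^ 3))).coeff (n+2) := by
    rw [← h1, coeff_reflect, revAt_le (by omega : n + 2 ≤ (n+1)+(n+3)),
      show (n+1)+(n+3) - (n+2) = n+2 by omega]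
    congr 1
    rw [Pn]; ring
  have hring : Pn α n * (1 - X) ^ 3 + vP α ^ (n+1) * (uP α ^ n * -((1 - X) ^ 3))
      = C (-(2*α - 1)) * ((uP α ^ n * (1 - X) ^ 2) * (vP α ^ n * (1 - X) ^ 2)) := by
    simp only [Pn, uP, vP, map_sub, map_mul, map_add, map_one, map_ofNat, map_neg]
    ring
  have hh : 2 * (Pn α n * (1 - X) ^ 3).coeff (n+2)
      = (Pn α n * (1 - X) ^ 3 + vP α ^ (n+1) * (uP α ^ n * -((1 - X) ^ 3))).coeff (n+2) := by
    rw [coeff_add, ← h2]; ring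
  rw [hh, hring, ← reflect_A2, coeff_C_mul, central_coeff_sq]

/-! ### Misc coefficient identities -/

lemma coeff_mul_one_sub_X (q : ℝ[X]) (k : ℕ) :
    (q * (1 - X)).coeff (k + 1) = q.coeff (k + 1) - q.coeff k := by
  rw [show q * (1-X) = q - q * X^1 by ring, coeff_sub, coeff_mul_X_pow', if_pos (by omega),
    show k+1-1 = k by omega]

lemma coeff_mul_one_sub_X_sq (q : ℝ[X]) (k : ℕ) :
    (q * (1 - X) ^ 2).coeff (k + 2) = q.coeff (k + 2) - 2 * q.coeff (k + 1) + q.coeff k := by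
  rw [show q * (1-X)^2 = q - C 2 * (q * X^1) + q * X^2 by simp only [map_ofNat]; ring,
    coeff_add, coeff_sub, coeff_C_mul, coeff_mul_X_pow', coeff_mul_X_pow',
    if_pos (by omega : 1 ≤ k + 2), if_pos (by omega : 2 ≤ k + 2),
    show k+2-1 = k+1 by omega, show k+2-2 = k by omega]

lemma coeff_A1_zero (α : ℝ) (n : ℕ) : (uP α ^ n * (1 - X)).coeff 0 = (1-α)^n := by
  rw [mul_coeff_zero, uP, coeff_linear_pow α (1-α) n 0 (Nat.zero_le n)]
  simp

lemma coeff_A2_zero (α : ℝ) (n : ℕ) : (uP α ^ n * (1 - X) ^ 2).coeff 0 = (1-α)^n := by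
  rw [mul_coeff_zero, uP, coeff_linear_pow α (1-α) n 0 (Nat.zero_le n), sq, mul_coeff_zero]
  simp

end CompeteAux

open CompeteAux Polynomial in
theorem competeProb_decreasing_convex_of_half_lt (α : ℝ) (hα0 : 1 / 2 < α) (hα : α < 1) :
    (∀ n : ℕ, competeProb α 1 1 (n + 1) < competeProb α 1 1 n) ∧
    (∀ n : ℕ, competeProb α 1 1 (n + 1) - competeProb α 1 1 n <
      competeProb α 1 1 (n + 2) - competeProb α 1 1 (n + 1)) := by
  have hβ : (0:ℝ) < 1 - α := by linarith
  have h2α : (0:ℝ) < 2*α - 1 := by linarith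
  have hαβ : (0:ℝ) < α * (1-α) := by nlinarith
  -- positivity of the sums of squares
  have hS1 : ∀ n : ℕ, 0 < ∑ i ∈ range (n + 2), ((uP α ^ n * (1 - X)).coeff i) ^ 2 := by
    intro n
    have h0 : 0 < ((uP α ^ n * (1 - X)).coeff 0) ^ 2 := by
      rw [coeff_A1_zero]; exact pow_pos (pow_pos hβ n) 2
    exact lt_of_lt_of_le h0
      (Finset.single_le_sum (f := fun i => ((uP α ^ n * (1 - X)).coeff i) ^ 2)
        (fun i _ => sq_nonneg _) (by simp : (0:ℕ) ∈ range (n+2)))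
  have hS2 : ∀ n : ℕ, 0 < ∑ i ∈ range (n + 3), ((uP α ^ n * (1 - X) ^ 2).coeff i) ^ 2 := by
    intro n
    have h0 : 0 < ((uP α ^ n * (1 - X) ^ 2).coeff 0) ^ 2 := by
      rw [coeff_A2_zero]; exact pow_pos (pow_pos hβ n) 2
    exact lt_of_lt_of_le h0
      (Finset.single_le_sum (f := fun i => ((uP α ^ n * (1 - X) ^ 2).coeff i) ^ 2)
        (fun i _ => sq_nonneg _) (by simp : (0:ℕ) ∈ range (n+3)))
  constructor
  · -- strictly decreasing
    intro n
    rw [competeProb_eq_Tn, competeProb_eq_Tn]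
    set S1 := ∑ i ∈ range (n + 2), ((uP α ^ n * (1 - X)).coeff i) ^ 2 with hS1def
    have e1 := Tn_succ α n
    have f1 := coeff_mul_one_sub_X (Pn α n) n
    have f4 := sq_sum_first α n
    have main : Tn α n - Tn α (n+1) = α*(1-α) * ((2*α-1) * S1) / 2 := by
      rw [← hS1def] at f4
      linear_combination -e1 - (α*(1-α)) * f1 + (α*(1-α))/2 * f4
    have hpos : 0 < α*(1-α) * ((2*α-1) * S1) / 2 :=
      div_pos (mul_pos hαβ (mul_pos h2α (hS1 n))) two_pos
    linarith
  · -- strictly convex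
    intro n
    rw [competeProb_eq_Tn, competeProb_eq_Tn, competeProb_eq_Tn]
    set S2 := ∑ i ∈ range (n + 3), ((uP α ^ n * (1 - X) ^ 2).coeff i) ^ 2 with hS2def
    have e1 := Tn_succ α n
    have e2 := Tn_succ α (n+1)
    have f1 := coeff_mul_one_sub_X (Pn α n) n
    have f1' := coeff_mul_one_sub_X (Pn α (n+1)) (n+1)
    have f2 : (Pn α (n+1) * (1 - X)).coeff (n+2)
        = α*(1-α) * (Pn α n * (1 - X)).coeff n
          + (α^2 + (1-α)^2) * (Pn α n * (1 - X)).coeff (n+1)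
          + α*(1-α) * (Pn α n * (1 - X)).coeff (n+2) := by
      rw [show Pn α (n+1) * (1 - X) = (Pn α n * (1 - X)) * (uP α * vP α) by
        rw [Pn_succ]; ring, coeff_mul_uv]
    have f3 : (Pn α n * (1 - X) ^ 3).coeff (n+2)
        = (Pn α n * (1 - X)).coeff (n+2) - 2 * (Pn α n * (1 - X)).coeff (n+1)
          + (Pn α n * (1 - X)).coeff n := by
      rw [show Pn α n * (1 - X) ^ 3 = (Pn α n * (1 - X)) * (1 - X) ^ 2 by ring,
        coeff_mul_one_sub_X_sq]
    have f4 := sq_sum_second α n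
    rw [← hS2def] at f4
    have main : Tn α (n+2) - Tn α (n+1) - (Tn α (n+1) - Tn α n)
        = (α*(1-α))^2 * ((2*α-1) * S2) / 2 := by
      linear_combination e2 - e1 - (α*(1-α)) * f1 + (α*(1-α)) * f1' - (α*(1-α)) * f2
        + (α*(1-α))^2 * f3 - (α*(1-α))^2/2 * f4
    have hpos : 0 < (α*(1-α))^2 * ((2*α-1) * S2) / 2 :=
      div_pos (mul_pos (pow_pos hαβ 2) (mul_pos h2α (hS2 n))) two_pos
    linarith
end

section
/- If r and d are positive integers with r ≥ 2d − 1, and α satisfies d/(r+1) < α < 1, then the sequence p_n^{r,d}, n = 0, 1, 2, …, is strictly decreasing. -/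
open Finset Filter Topology

noncomputable def bc (N : ℕ) (k : ℤ) : ℝ := if 0 ≤ k then (N.choose k.toNat : ℝ) else 0

lemma bc_nonneg (N : ℕ) (k : ℤ) : 0 ≤ bc N k := by
  unfold bc; split <;> positivity

lemma bc_of_neg {N : ℕ} {k : ℤ} (h : k < 0) : bc N k = 0 := by
  unfold bc; rw [if_neg (by omega)]

lemma bc_of_gt {N : ℕ} {k : ℤ} (h : (N : ℤ) < k) : bc N k = 0 := by
  unfold bc; rw [if_pos (by omega), Nat.choose_eq_zero_of_lt (by omega), Nat.cast_zero]

lemma bc_natCast (N k : ℕ) : bc N (k : ℤ) = (N.choose k : ℝ) := by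
  unfold bc; rw [if_pos (by positivity), Int.toNat_natCast]

lemma bc_pascal (N : ℕ) (k : ℤ) : bc (N + 1) k = bc N k + bc N (k - 1) := by
  rcases lt_trichotomy k 0 with h | h | h
  · rw [bc_of_neg h, bc_of_neg h, bc_of_neg (by omega)]; ring
  · subst h; simp [bc, bc_of_neg]
  · obtain ⟨t, rfl⟩ : ∃ t : ℕ, k = (t : ℤ) + 1 := ⟨(k - 1).toNat, by omega⟩
    have : ((t : ℤ) + 1) - 1 = (t : ℤ) := by ring
    rw [this]
    rw [show ((t : ℤ) + 1) = ((t + 1 : ℕ) : ℤ) by push_cast; ring]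
    rw [bc_natCast, bc_natCast, bc_natCast, Nat.choose_succ_succ]
    push_cast; ring

/-- shift an integer interval sum -/
lemma sum_Icc_shift (g : ℤ → ℝ) (a b c : ℤ) :
    ∑ m ∈ Finset.Icc (a + c) (b + c), g m = ∑ m ∈ Finset.Icc a b, g (m + c) := by
  rw [← Finset.map_add_right_Icc, Finset.sum_map]
  rfl

/-- integer Icc sum from 0 to n equals nat range sum -/
lemma sum_Icc_int_nat (g : ℤ → ℝ) (a b : ℕ) :
    ∑ k ∈ Finset.Icc (a : ℤ) (b : ℤ), g k = ∑ k ∈ Finset.Icc a b, g (k : ℤ) := by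
  refine Finset.sum_nbij' (fun k => k.toNat) (fun k => (k : ℤ)) ?_ ?_ ?_ ?_ ?_
  · intro x hx; simp only [Finset.mem_Icc] at *; omega
  · intro x hx; simp only [Finset.mem_Icc] at *; omega
  · intro x hx; simp only [Finset.mem_Icc] at hx; show ((x.toNat : ℕ) : ℤ) = x; omega
  · intro x hx; simp only [Finset.mem_Icc] at hx; show ((x : ℤ)).toNat = x; omega
  · intro x hx; simp only [Finset.mem_Icc] at hx
    show g x = g ((x.toNat : ℕ) : ℤ); congr 1; omega

lemma range_succ_eq_Icc (n : ℕ) : Finset.range (n + 1) = Finset.Icc 0 n := by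
  ext x; simp [Nat.lt_succ_iff]

lemma sum_Icc_split_low (g : ℤ → ℝ) (a b : ℤ) (h : a ≤ b) :
    ∑ m ∈ Finset.Icc a b, g m = g a + ∑ m ∈ Finset.Icc (a + 1) b, g m := by
  rw [Finset.Icc_eq_cons_Ioc h, Finset.sum_cons]
  congr 1
  rw [show Finset.Ioc a b = Finset.Icc (a+1) b by ext x; simp [Int.add_one_le_iff]]

lemma sum_Icc_split_top (g : ℤ → ℝ) (a b : ℤ) (h : a ≤ b + 1) :
    ∑ m ∈ Finset.Icc a (b + 1), g m = (∑ m ∈ Finset.Icc a b, g m) + g (b + 1) := by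
  rw [show Finset.Icc a (b+1) = insert (b+1) (Finset.Icc a b) by ext x; simp; omega,
    Finset.sum_insert (by simp)]
  ring

/-- pmf of Bin(n+r,α) + Bin(n,1-α) at m (as a formal sum; zpow exponents). -/
noncomputable def fdist (α : ℝ) (r n : ℕ) (m : ℤ) : ℝ :=
  ∑ i ∈ Finset.Icc (0 : ℤ) (n : ℤ),
    bc n i * (1 - α) ^ i * α ^ ((n : ℤ) - i) * bc (n + r) (m - i) * α ^ (m - i) *
      (1 - α) ^ ((n : ℤ) + r - m + i)

lemma fdist_eq_zero_of_gt {α : ℝ} {r n : ℕ} {m : ℤ} (h : (2 * n + r : ℤ) < m) :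
    fdist α r n m = 0 := by
  unfold fdist
  apply Finset.sum_eq_zero
  intro i hi
  simp only [Finset.mem_Icc] at hi
  rw [bc_of_gt (show ((n + r : ℕ) : ℤ) < m - i by push_cast; omega)]
  ring

lemma fdist_zero (α : ℝ) (r : ℕ) (m : ℤ) :
    fdist α r 0 m = bc r m * α ^ m * (1 - α) ^ ((r : ℤ) - m) := by
  unfold fdist
  rw [show ((0 : ℕ) : ℤ) = (0 : ℤ) by rfl, Finset.Icc_self, Finset.sum_singleton]
  rw [show (0:ℤ) + (r:ℤ) = (r:ℤ) by ring]
  rw [show bc 0 0 = 1 by simpa using bc_natCast 0 0, show (0:ℕ)+r = r by ring,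
    show (r:ℤ)-m+0 = (r:ℤ)-m by ring, show m - 0 = m by ring, show (0:ℤ)-0=0 by ring]
  norm_num

lemma fdist_rec {α : ℝ} (hα : α ≠ 0) (hα1 : (1:ℝ) - α ≠ 0) (r n : ℕ) (m : ℤ) :
    fdist α r (n + 1) m =
      α * (1 - α) * fdist α r n (m - 2) + (α ^ 2 + (1 - α) ^ 2) * fdist α r n (m - 1) +
        α * (1 - α) * fdist α r n m := by
  have e1 : fdist α r (n + 1) m = ∑ i ∈ Finset.Icc (0:ℤ) ((n:ℤ) + 1),
      ((bc n i * (1-α)^i * α^((n:ℤ)+1-i) * bc (n+r) (m-i) * α^(m-i) * (1-α)^((n:ℤ)+1+r-m+i))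
      + (bc n i * (1-α)^i * α^((n:ℤ)+1-i) * bc (n+r) (m-i-1) * α^(m-i) * (1-α)^((n:ℤ)+1+r-m+i))
      + (bc n (i-1) * (1-α)^i * α^((n:ℤ)+1-i) * bc (n+r) (m-i) * α^(m-i) * (1-α)^((n:ℤ)+1+r-m+i))
      + (bc n (i-1) * (1-α)^i * α^((n:ℤ)+1-i) * bc (n+r) (m-i-1) * α^(m-i) * (1-α)^((n:ℤ)+1+r-m+i))) := by
    unfold fdist
    rw [show ((n+1:ℕ):ℤ) = (n:ℤ)+1 by push_cast; ring]
    apply Finset.sum_congr rfl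
    intro i _
    rw [bc_pascal n i, show (n+1+r) = (n+r)+1 by ring, bc_pascal (n+r) (m-i)]
    push_cast
    ring
  rw [e1, Finset.sum_add_distrib, Finset.sum_add_distrib, Finset.sum_add_distrib]
  have hS11 : ∑ i ∈ Finset.Icc (0:ℤ) ((n:ℤ)+1),
      bc n i * (1-α)^i * α^((n:ℤ)+1-i) * bc (n+r) (m-i) * α^(m-i) * (1-α)^((n:ℤ)+1+r-m+i)
      = α * (1-α) * fdist α r n m := by
    rw [sum_Icc_split_top _ 0 (n:ℤ) (by positivity)]
    rw [bc_of_gt (show (n:ℤ) < (n:ℤ)+1 by omega)]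
    unfold fdist
    rw [Finset.mul_sum]
    simp only [zero_mul, mul_zero, zero_mul, add_zero]
    apply Finset.sum_congr rfl
    intro i _
    rw [show (n:ℤ)+1-i = ((n:ℤ)-i)+1 by ring, zpow_add_one₀ hα,
      show (n:ℤ)+1+r-m+i = ((n:ℤ)+r-m+i)+1 by ring, zpow_add_one₀ hα1]
    ring
  have hS12 : ∑ i ∈ Finset.Icc (0:ℤ) ((n:ℤ)+1),
      bc n i * (1-α)^i * α^((n:ℤ)+1-i) * bc (n+r) (m-i-1) * α^(m-i) * (1-α)^((n:ℤ)+1+r-m+i)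
      = α^2 * fdist α r n (m-1) := by
    rw [sum_Icc_split_top _ 0 (n:ℤ) (by positivity)]
    rw [bc_of_gt (show (n:ℤ) < (n:ℤ)+1 by omega)]
    unfold fdist
    rw [Finset.mul_sum]
    simp only [zero_mul, mul_zero, zero_mul, add_zero]
    apply Finset.sum_congr rfl
    intro i _
    rw [show m-i-1 = (m-1)-i by ring,
      show (n:ℤ)+1-i = ((n:ℤ)-i)+1 by ring, zpow_add_one₀ hα,
      show m-i = ((m-1)-i)+1 by ring, zpow_add_one₀ hα,
      show (n:ℤ)+1+r-m+i = ((n:ℤ)+r-(m-1)+i) by ring]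
    ring
  have hS21 : ∑ i ∈ Finset.Icc (0:ℤ) ((n:ℤ)+1),
      bc n (i-1) * (1-α)^i * α^((n:ℤ)+1-i) * bc (n+r) (m-i) * α^(m-i) * (1-α)^((n:ℤ)+1+r-m+i)
      = (1-α)^2 * fdist α r n (m-1) := by
    rw [show (0:ℤ) = -1+1 by ring, show (n:ℤ)+1 = (n:ℤ)+1 from rfl]
    rw [sum_Icc_shift _ (-1) (n:ℤ) 1]
    rw [sum_Icc_split_low _ (-1) (n:ℤ) (by omega)]
    rw [show bc n (-1+1-1) = 0 from bc_of_neg (by omega)]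
    unfold fdist
    rw [Finset.mul_sum]
    simp only [zero_mul, mul_zero, zero_mul, zero_add]
    apply Finset.sum_congr rfl
    intro i _
    rw [show i+1-1 = i by ring,
      show (n:ℤ)+1-(i+1) = (n:ℤ)-i by ring,
      show (1-α)^(i+1) = (1-α)^i * (1-α) from zpow_add_one₀ hα1 i,
      show m-(i+1) = ((m-1)-i) by ring,
      show (n:ℤ)+1+r-m+(i+1) = ((n:ℤ)+r-(m-1)+i)+1 by ring, zpow_add_one₀ hα1]
    ring
  have hS22 : ∑ i ∈ Finset.Icc (0:ℤ) ((n:ℤ)+1),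
      bc n (i-1) * (1-α)^i * α^((n:ℤ)+1-i) * bc (n+r) (m-i-1) * α^(m-i) * (1-α)^((n:ℤ)+1+r-m+i)
      = α * (1-α) * fdist α r n (m-2) := by
    rw [show (0:ℤ) = -1+1 by ring, show (n:ℤ)+1 = (n:ℤ)+1 from rfl]
    rw [sum_Icc_shift _ (-1) (n:ℤ) 1]
    rw [sum_Icc_split_low _ (-1) (n:ℤ) (by omega)]
    rw [show bc n (-1+1-1) = 0 from bc_of_neg (by omega)]
    unfold fdist
    rw [Finset.mul_sum]
    simp only [zero_mul, mul_zero, zero_mul, zero_add]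
    apply Finset.sum_congr rfl
    intro i _
    rw [show i+1-1 = i by ring,
      show (n:ℤ)+1-(i+1) = (n:ℤ)-i by ring,
      show (1-α)^(i+1) = (1-α)^i * (1-α) from zpow_add_one₀ hα1 i,
      show m-(i+1)-1 = ((m-2)-i) by ring,
      show m-(i+1) = ((m-2)-i)+1 by ring, zpow_add_one₀ hα,
      show (n:ℤ)+1+r-m+(i+1) = ((n:ℤ)+r-(m-2)+i) by ring]
    ring
  rw [hS11, hS12, hS21, hS22]
  ring

/-- the absorption identity k*C(r,k) = (r+1-k)*C(r,k-1), valid for all k ≥ 1. -/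
lemma bc_mult (r : ℕ) (k : ℤ) (hk : 1 ≤ k) :
    (k : ℝ) * bc r k = ((r : ℝ) + 1 - k) * bc r (k - 1) := by
  rcases le_or_gt k r with h | h
  · obtain ⟨t, rfl⟩ : ∃ t : ℕ, k = ((t : ℤ) + 1) := ⟨(k - 1).toNat, by omega⟩
    have ht : t + 1 ≤ r := by exact_mod_cast h
    rw [show (t : ℤ) + 1 - 1 = (t : ℤ) by ring, show (t : ℤ) + 1 = ((t + 1 : ℕ) : ℤ) by push_cast; ring,
      bc_natCast, bc_natCast]
    have := Nat.choose_succ_right_eq r t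
    have hcast : ((r.choose (t + 1) * (t + 1) : ℕ) : ℝ) = ((r.choose t * (r - t) : ℕ) : ℝ) := by
      rw [this]
    push_cast [Nat.cast_sub (by omega : t ≤ r)] at hcast
    push_cast
    nlinarith [hcast]
  · rcases eq_or_lt_of_le (by omega : (r : ℤ) + 1 ≤ k) with h' | h'
    · rw [← h', bc_of_gt (by omega), show (r:ℤ)+1-1 = (r:ℤ) by ring]
      push_cast
      ring
    · rw [bc_of_gt (by omega), bc_of_gt (by omega)]; ring


lemma step_aux (u v c A B A' B' : ℝ) (hvc : 1 ≤ v - c) (huc : 1 ≤ u - c) (hc : 0 ≤ c)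
    (hu : v ≤ u) (h1 : (v - c) * A = (u + c) * A') (h2 : (v + c) * B' = (u - c) * B)
    (hA : 0 ≤ A) (hB : 0 ≤ B) (hB' : 0 ≤ B') (k : ℕ)
    (ih : u ^ k * A ≤ v ^ k * B) : u ^ (k + 2) * A' ≤ v ^ (k + 2) * B' := by
  have hvpos : (0:ℝ) < v + c := by linarith
  have hupos : (0:ℝ) < u + c := by linarith
  have hcancel : (0:ℝ) < (u + c) * (v + c) := mul_pos hupos hvpos
  have hscalar : u ^ 2 * ((v - c) * (v + c)) ≤ v ^ 2 * ((u - c) * (u + c)) := by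
    nlinarith [mul_nonneg (mul_nonneg (sq_nonneg c) (sub_nonneg.mpr hu))
      (by linarith : (0:ℝ) ≤ u + v)]
  rw [pow_add, pow_add]
  apply le_of_mul_le_mul_left _ hcancel
  calc (u + c) * (v + c) * (u ^ k * u ^ 2 * A')
      = (v + c) * (u ^ 2 * (u ^ k * ((u + c) * A'))) := by ring
    _ = (v + c) * (u ^ 2 * (u ^ k * ((v - c) * A))) := by rw [← h1]
    _ = (u ^ 2 * ((v - c) * (v + c))) * (u ^ k * A) := by ring
    _ ≤ (u ^ 2 * ((v - c) * (v + c))) * (v ^ k * B) := by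
        apply mul_le_mul_of_nonneg_left ih
        apply mul_nonneg (sq_nonneg u) (mul_nonneg (by linarith) (by linarith))
    _ ≤ (v ^ 2 * ((u - c) * (u + c))) * (v ^ k * B) := by
        apply mul_le_mul_of_nonneg_right hscalar
        apply mul_nonneg (pow_nonneg (by linarith) k) hB
    _ = (u + c) * (v ^ 2 * (v ^ k * ((u - c) * B))) := by ring
    _ = (u + c) * (v ^ 2 * (v ^ k * ((v + c) * B'))) := by rw [← h2]
    _ = (u + c) * (v + c) * (v ^ k * v ^ 2 * B') := by ring

lemma key_choose (r d : ℕ) (hd : 1 ≤ d) (hrd : 2 * d - 1 ≤ r) : ∀ j : ℕ,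
    ((r : ℝ) + 1 - d) ^ (2 * j + 1) * bc r ((d : ℤ) - 1 - j) ≤
      (d : ℝ) ^ (2 * j + 1) * bc r ((d : ℤ) + j) := by
  have hdr : d ≤ r := by omega
  have hu : (d : ℝ) ≤ (r : ℝ) + 1 - d := by
    have : (2 * d : ℝ) ≤ (r : ℝ) + 1 := by exact_mod_cast (by omega : 2 * d ≤ r + 1)
    linarith
  have hd1 : (1 : ℝ) ≤ (d : ℝ) := by exact_mod_cast hd
  intro j
  induction j with
  | zero =>
    have h := bc_mult r d (by exact_mod_cast hd)
    rw [show ((d : ℤ) : ℝ) = (d : ℝ) by norm_num] at h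
    rw [pow_one, pow_one, show (d : ℤ) - 1 - ((0:ℕ):ℤ) = (d:ℤ) - 1 by push_cast; ring,
      show (d : ℤ) + ((0:ℕ):ℤ) = (d:ℤ) by push_cast; ring]
    linarith [h]
  | succ j ih =>
    rcases le_or_gt ((d:ℤ) - 1 - ((j+1:ℕ):ℤ)) (-1) with hneg | hpos
    · rw [bc_of_neg (by omega), mul_zero]
      exact mul_nonneg (by positivity) (bc_nonneg _ _)
    · have hjd : (j : ℤ) + 2 ≤ d := by push_cast at hpos ⊢; omega
      have h1 : ((d:ℝ) - ((j:ℝ)+1)) * bc r ((d : ℤ) - 1 - j)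
          = (((r:ℝ) + 1 - d) + ((j:ℝ)+1)) * bc r ((d : ℤ) - 1 - (j+1:ℕ)) := by
        have h := bc_mult r ((d : ℤ) - 1 - j) (by omega)
        rw [show (d : ℤ) - 1 - (j:ℤ) - 1 = (d : ℤ) - 1 - ((j+1:ℕ):ℤ) by push_cast; ring] at h
        rw [show (((d : ℤ) - 1 - (j:ℤ) : ℤ) : ℝ) = (d:ℝ) - ((j:ℝ)+1) by push_cast; ring] at h
        rw [h]
        push_cast
        ring
      have h2 : ((d:ℝ) + ((j:ℝ)+1)) * bc r ((d : ℤ) + (j+1:ℕ))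
          = (((r:ℝ) + 1 - d) - ((j:ℝ)+1)) * bc r ((d : ℤ) + j) := by
        have h := bc_mult r ((d : ℤ) + ((j+1:ℕ):ℤ)) (by omega)
        rw [show (d : ℤ) + ((j+1:ℕ):ℤ) - 1 = (d : ℤ) + (j:ℤ) by push_cast; ring] at h
        rw [show (((d : ℤ) + ((j+1:ℕ):ℤ) : ℤ) : ℝ) = (d:ℝ) + ((j:ℝ)+1) by push_cast; ring] at h
        rw [h]
        push_cast
        ring
      have huc : (1:ℝ) ≤ ((r:ℝ) + 1 - d) - ((j:ℝ)+1) := by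
        have : ((j:ℝ) + 2) ≤ (d:ℝ) := by exact_mod_cast hjd
        linarith
      have hvc : (1:ℝ) ≤ (d:ℝ) - ((j:ℝ)+1) := by
        have : ((j:ℝ) + 2) ≤ (d:ℝ) := by exact_mod_cast hjd
        linarith
      have := step_aux ((r:ℝ)+1-d) (d:ℝ) ((j:ℝ)+1)
        (bc r ((d : ℤ) - 1 - j)) (bc r ((d : ℤ) + j))
        (bc r ((d : ℤ) - 1 - (j+1:ℕ))) (bc r ((d : ℤ) + (j+1:ℕ)))
        hvc huc (by positivity) hu h1 h2 (bc_nonneg _ _) (bc_nonneg _ _) (bc_nonneg _ _)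
        (2*j+1) ih
      rw [show 2*(j+1)+1 = (2*j+1)+2 by ring]
      exact this

section
variable {α : ℝ} {r d : ℕ}

lemma alpha_pos (hd : 1 ≤ d) (hα0 : (d : ℝ) / (r + 1) < α) : 0 < α := by
  have : (0:ℝ) < (d : ℝ) / (r + 1) := by
    apply div_pos (by exact_mod_cast hd) (by positivity)
  linarith

lemma hkey_ineq (hd : 1 ≤ d) (hα0 : (d : ℝ) / (r + 1) < α) :
    (d : ℝ) * (1 - α) < ((r : ℝ) + 1 - d) * α := by
  have h := (div_lt_iff₀ (by positivity : (0:ℝ) < (r:ℝ) + 1)).mp hα0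
  nlinarith

lemma base_nonneg (hd : 1 ≤ d) (hrd : 2 * d - 1 ≤ r)
    (hα0 : (d : ℝ) / (r + 1) < α) (hα1 : α < 1) (j : ℕ) :
    bc r ((d:ℤ) - 1 - j) * α ^ ((d:ℤ) - 1 - j) * (1 - α) ^ ((r:ℤ) - ((d:ℤ) - 1 - j)) ≤
      bc r ((d:ℤ) + j) * α ^ ((d:ℤ) + j) * (1 - α) ^ ((r:ℤ) - ((d:ℤ) + j)) := by
  have hαp : 0 < α := alpha_pos hd hα0
  have h1αp : (0:ℝ) < 1 - α := by linarith
  have hkey := hkey_ineq hd hα0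
  have hdpos : (0:ℝ) < (d:ℝ) := by exact_mod_cast hd
  have hrdpos : (0:ℝ) < (r:ℝ) + 1 - d := by nlinarith [hkey, hαp, h1αp]
  -- star inequality with ℕ powers
  have star : bc r ((d:ℤ) - 1 - j) * (1 - α) ^ (2*j+1) ≤ bc r ((d:ℤ) + j) * α ^ (2*j+1) := by
    have hpow : ((d:ℝ) * (1 - α)) ^ (2*j+1) ≤ (((r:ℝ) + 1 - d) * α) ^ (2*j+1) :=
      pow_le_pow_left₀ (by positivity) hkey.le _
    have hd2 : (0:ℝ) < (d:ℝ) ^ (2*j+1) := by positivity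
    apply le_of_mul_le_mul_left _ hd2
    calc (d:ℝ) ^ (2*j+1) * (bc r ((d:ℤ) - 1 - j) * (1 - α) ^ (2*j+1))
        = bc r ((d:ℤ) - 1 - j) * ((d:ℝ) * (1 - α)) ^ (2*j+1) := by rw [mul_pow]; ring
      _ ≤ bc r ((d:ℤ) - 1 - j) * (((r:ℝ) + 1 - d) * α) ^ (2*j+1) :=
          mul_le_mul_of_nonneg_left hpow (bc_nonneg _ _)
      _ = (((r:ℝ) + 1 - d) ^ (2*j+1) * bc r ((d:ℤ) - 1 - j)) * α ^ (2*j+1) := by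
          rw [mul_pow]; ring
      _ ≤ ((d:ℝ) ^ (2*j+1) * bc r ((d:ℤ) + j)) * α ^ (2*j+1) :=
          mul_le_mul_of_nonneg_right (key_choose r d hd hrd j) (by positivity)
      _ = (d:ℝ) ^ (2*j+1) * (bc r ((d:ℤ) + j) * α ^ (2*j+1)) := by ring
  have eα : α ^ ((d:ℤ) + j) = α ^ ((d:ℤ) - 1 - j) * α ^ (2*j+1) := by
    rw [show (d:ℤ) + (j:ℤ) = ((d:ℤ) - 1 - (j:ℤ)) + ((2*j+1 : ℕ) : ℤ) by push_cast; ring,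
      zpow_add₀ hαp.ne', zpow_natCast]
  have e1α : (1-α) ^ ((r:ℤ) - ((d:ℤ) - 1 - j)) =
      (1-α) ^ ((r:ℤ) - ((d:ℤ) + j)) * (1-α) ^ (2*j+1) := by
    rw [show (r:ℤ) - ((d:ℤ) - 1 - (j:ℤ)) = ((r:ℤ) - ((d:ℤ) + (j:ℤ))) + ((2*j+1 : ℕ) : ℤ) by
        push_cast; ring,
      zpow_add₀ h1αp.ne', zpow_natCast]
  rw [eα, e1α]
  have hPQ : (0:ℝ) < α ^ ((d:ℤ) - 1 - j) * (1-α) ^ ((r:ℤ) - ((d:ℤ) + j)) :=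
    mul_pos (zpow_pos hαp _) (zpow_pos h1αp _)
  calc bc r ((d:ℤ) - 1 - j) * α ^ ((d:ℤ) - 1 - j) *
        ((1-α) ^ ((r:ℤ) - ((d:ℤ) + j)) * (1-α) ^ (2*j+1))
      = (bc r ((d:ℤ) - 1 - j) * (1-α) ^ (2*j+1)) *
        (α ^ ((d:ℤ) - 1 - j) * (1-α) ^ ((r:ℤ) - ((d:ℤ) + j))) := by ring
    _ ≤ (bc r ((d:ℤ) + j) * α ^ (2*j+1)) *
        (α ^ ((d:ℤ) - 1 - j) * (1-α) ^ ((r:ℤ) - ((d:ℤ) + j))) :=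
        mul_le_mul_of_nonneg_right star hPQ.le
    _ = bc r ((d:ℤ) + j) * (α ^ ((d:ℤ) - 1 - j) * α ^ (2*j+1)) *
        (1-α) ^ ((r:ℤ) - ((d:ℤ) + j)) := by ring

lemma base_pos (hd : 1 ≤ d) (hrd : 2 * d - 1 ≤ r)
    (hα0 : (d : ℝ) / (r + 1) < α) (hα1 : α < 1) :
    bc r ((d:ℤ) - 1) * α ^ ((d:ℤ) - 1) * (1 - α) ^ ((r:ℤ) - ((d:ℤ) - 1)) <
      bc r (d:ℤ) * α ^ (d:ℤ) * (1 - α) ^ ((r:ℤ) - (d:ℤ)) := by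
  have hαp : 0 < α := alpha_pos hd hα0
  have h1αp : (0:ℝ) < 1 - α := by linarith
  have hkey := hkey_ineq hd hα0
  have hdpos : (0:ℝ) < (d:ℝ) := by exact_mod_cast hd
  have hrdpos : (0:ℝ) < (r:ℝ) + 1 - d := by nlinarith [hkey]
  have hbcd : (0:ℝ) < bc r (d:ℤ) := by
    rw [bc_natCast]
    exact_mod_cast Nat.choose_pos (by omega : d ≤ r)
  have hm := bc_mult r d (by exact_mod_cast hd)
  rw [show ((d:ℤ):ℝ) = (d:ℝ) by norm_num] at hm
  have star : bc r ((d:ℤ) - 1) * (1 - α) < bc r (d:ℤ) * α := by nlinarith [hm, hkey, hbcd]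
  have eα : α ^ ((d:ℤ)) = α ^ ((d:ℤ) - 1) * α := by
    rw [← zpow_add_one₀ hαp.ne' ((d:ℤ) - 1)]; congr 1; ring
  have e1α : (1-α) ^ ((r:ℤ) - ((d:ℤ) - 1)) = (1-α) ^ ((r:ℤ) - (d:ℤ)) * (1-α) := by
    rw [← zpow_add_one₀ h1αp.ne' ((r:ℤ) - (d:ℤ))]; congr 1; ring
  rw [eα, e1α]
  have hPQ : (0:ℝ) < α ^ ((d:ℤ) - 1) * (1-α) ^ ((r:ℤ) - (d:ℤ)) :=
    mul_pos (zpow_pos hαp _) (zpow_pos h1αp _)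
  calc bc r ((d:ℤ) - 1) * α ^ ((d:ℤ) - 1) * ((1-α) ^ ((r:ℤ) - (d:ℤ)) * (1-α))
      = (bc r ((d:ℤ) - 1) * (1-α)) * (α ^ ((d:ℤ) - 1) * (1-α) ^ ((r:ℤ) - (d:ℤ))) := by ring
    _ < (bc r (d:ℤ) * α) * (α ^ ((d:ℤ) - 1) * (1-α) ^ ((r:ℤ) - (d:ℤ))) :=
        mul_lt_mul_of_pos_right star hPQ
    _ = bc r (d:ℤ) * (α ^ ((d:ℤ) - 1) * α) * (1-α) ^ ((r:ℤ) - (d:ℤ)) := by ring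

end

lemma main_ind {α : ℝ} {r d : ℕ} (hd : 1 ≤ d) (hrd : 2 * d - 1 ≤ r)
    (hα0 : (d : ℝ) / (r + 1) < α) (hα1 : α < 1) : ∀ n : ℕ,
    (∀ j : ℕ, fdist α r n ((n:ℤ) + d - 1 - j) ≤ fdist α r n ((n:ℤ) + d + j)) ∧
      fdist α r n ((n:ℤ) + d - 1) < fdist α r n ((n:ℤ) + d) := by
  have hαp : 0 < α := alpha_pos hd hα0
  have h1αp : (0:ℝ) < 1 - α := by linarith
  have harg : ∀ (k : ℕ) (x y : ℤ), x = y → fdist α r k x = fdist α r k y := by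
    intro k x y h; rw [h]
  have ha : (0:ℝ) < α * (1 - α) := mul_pos hαp h1αp
  have hba : (0:ℝ) < α ^ 2 + (1 - α) ^ 2 - α * (1 - α) := by nlinarith [sq_nonneg (1 - 2*α)]
  intro n
  induction n with
  | zero =>
    constructor
    · intro j
      rw [fdist_zero, fdist_zero,
        show ((0:ℕ):ℤ) + (d:ℤ) - 1 - (j:ℤ) = (d:ℤ) - 1 - (j:ℤ) by push_cast; ring,
        show ((0:ℕ):ℤ) + (d:ℤ) + (j:ℤ) = (d:ℤ) + (j:ℤ) by push_cast; ring]
      exact base_nonneg hd hrd hα0 hα1 j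
    · rw [fdist_zero, fdist_zero,
        show ((0:ℕ):ℤ) + (d:ℤ) - 1 = (d:ℤ) - 1 by push_cast; ring,
        show ((0:ℕ):ℤ) + (d:ℤ) = (d:ℤ) by push_cast; ring]
      exact base_pos hd hrd hα0 hα1
  | succ n ih =>
    obtain ⟨ih1, ih2⟩ := ih
    have hstrict : fdist α r (n+1) (((n+1:ℕ):ℤ) + d - 1) < fdist α r (n+1) (((n+1:ℕ):ℤ) + d) := by
      rw [fdist_rec hαp.ne' h1αp.ne' r n, fdist_rec hαp.ne' h1αp.ne' r n]
      rw [harg n (((n+1:ℕ):ℤ) + d - 1 - 2) ((n:ℤ) + d - 1 - ((1:ℕ):ℤ)) (by push_cast; ring),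
        harg n (((n+1:ℕ):ℤ) + d - 1 - 1) ((n:ℤ) + d - 1) (by push_cast; ring),
        harg n (((n+1:ℕ):ℤ) + d - 2) ((n:ℤ) + d - 1) (by push_cast; ring),
        harg n (((n+1:ℕ):ℤ) + d - 1) ((n:ℤ) + d) (by push_cast; ring),
        harg n (((n+1:ℕ):ℤ) + d) ((n:ℤ) + d + ((1:ℕ):ℤ)) (by push_cast; ring)]
      have k1 : α * (1-α) * fdist α r n ((n:ℤ) + d - 1 - ((1:ℕ):ℤ)) ≤
          α * (1-α) * fdist α r n ((n:ℤ) + d + ((1:ℕ):ℤ)) :=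
        mul_le_mul_of_nonneg_left (ih1 1) ha.le
      have k2 : (α ^ 2 + (1 - α) ^ 2 - α * (1 - α)) * fdist α r n ((n:ℤ) + d - 1) <
          (α ^ 2 + (1 - α) ^ 2 - α * (1 - α)) * fdist α r n ((n:ℤ) + d) :=
        mul_lt_mul_of_pos_left ih2 hba
      linarith [k1, k2]
    refine ⟨?_, hstrict⟩
    intro j
    rcases j with _ | j
    · rw [harg (n+1) (((n+1:ℕ):ℤ) + d - 1 - ((0:ℕ):ℤ)) (((n+1:ℕ):ℤ) + d - 1) (by push_cast; ring),
        harg (n+1) (((n+1:ℕ):ℤ) + d + ((0:ℕ):ℤ)) (((n+1:ℕ):ℤ) + d) (by push_cast; ring)]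
      exact hstrict.le
    · rw [fdist_rec hαp.ne' h1αp.ne' r n, fdist_rec hαp.ne' h1αp.ne' r n]
      rw [harg n (((n+1:ℕ):ℤ) + d - 1 - ((j+1:ℕ):ℤ) - 2) ((n:ℤ) + d - 1 - ((j+2:ℕ):ℤ))
          (by push_cast; ring),
        harg n (((n+1:ℕ):ℤ) + d - 1 - ((j+1:ℕ):ℤ) - 1) ((n:ℤ) + d - 1 - ((j+1:ℕ):ℤ))
          (by push_cast; ring),
        harg n (((n+1:ℕ):ℤ) + d - 1 - ((j+1:ℕ):ℤ)) ((n:ℤ) + d - 1 - ((j:ℕ):ℤ))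
          (by push_cast; ring),
        harg n (((n+1:ℕ):ℤ) + d + ((j+1:ℕ):ℤ) - 2) ((n:ℤ) + d + ((j:ℕ):ℤ))
          (by push_cast; ring),
        harg n (((n+1:ℕ):ℤ) + d + ((j+1:ℕ):ℤ) - 1) ((n:ℤ) + d + ((j+1:ℕ):ℤ))
          (by push_cast; ring),
        harg n (((n+1:ℕ):ℤ) + d + ((j+1:ℕ):ℤ)) ((n:ℤ) + d + ((j+2:ℕ):ℤ))
          (by push_cast; ring)]
      have k1 : α * (1-α) * fdist α r n ((n:ℤ) + d - 1 - ((j:ℕ):ℤ)) ≤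
          α * (1-α) * fdist α r n ((n:ℤ) + d + ((j:ℕ):ℤ)) :=
        mul_le_mul_of_nonneg_left (ih1 j) ha.le
      have k2 : (α ^ 2 + (1 - α) ^ 2) * fdist α r n ((n:ℤ) + d - 1 - ((j+1:ℕ):ℤ)) ≤
          (α ^ 2 + (1 - α) ^ 2) * fdist α r n ((n:ℤ) + d + ((j+1:ℕ):ℤ)) :=
        mul_le_mul_of_nonneg_left (ih1 (j+1)) (by positivity)
      have k3 : α * (1-α) * fdist α r n ((n:ℤ) + d - 1 - ((j+2:ℕ):ℤ)) ≤
          α * (1-α) * fdist α r n ((n:ℤ) + d + ((j+2:ℕ):ℤ)) :=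
        mul_le_mul_of_nonneg_left (ih1 (j+2)) ha.le
      linarith [k1, k2, k3]

lemma competeProb_eq (α : ℝ) (r d n : ℕ) :
    competeProb α r d n = ∑ m ∈ Finset.Icc ((n:ℤ) + d) (2 * (n:ℤ) + r), fdist α r n m := by
  unfold fdist
  rw [Finset.sum_comm]
  rw [show (0:ℤ) = ((0:ℕ):ℤ) from rfl, sum_Icc_int_nat, ← range_succ_eq_Icc]
  unfold competeProb
  rw [← Finset.sum_range_reflect]
  apply Finset.sum_congr rfl
  intro i hi
  have hin : i ≤ n := by simpa [Nat.lt_succ_iff] using hi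
  -- reindex inner sum on the fdist side
  rw [show ((n:ℤ) + d) = ((n:ℤ) + d - i) + i by ring,
    show (2 * (n:ℤ) + r) = (2 * (n:ℤ) + r - i) + i by ring,
    sum_Icc_shift _ ((n:ℤ) + d - i) (2 * (n:ℤ) + r - i) i]
  rw [show ((n:ℤ) + d - i) = ((n + d - i : ℕ) : ℤ) by omega,
    show (2 * (n:ℤ) + r - i) = ((2 * n + r - i : ℕ) : ℤ) by omega,
    sum_Icc_int_nat]
  rw [← Finset.sum_subset (Finset.Icc_subset_Icc_right (by omega : n + r ≤ 2 * n + r - i))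
    (by
      intro j hj hj2
      simp only [Finset.mem_Icc] at hj hj2
      have : n + r < j := by omega
      rw [bc_of_gt (show ((n + r : ℕ) : ℤ) < (j:ℤ) + (i:ℤ) - (i:ℤ) by push_cast; omega)]
      ring)]
  rw [show n + 1 - 1 - i = n - i by omega, show (n - i) + d = n + d - i by omega]
  apply Finset.sum_congr rfl
  intro j hj
  simp only [Finset.mem_Icc] at hj
  have hjr : j ≤ n + r := hj.2
  rw [show ((j:ℤ) + i - i) = (j:ℤ) by ring,
    show ((n:ℤ) + r - ((j:ℤ) + i) + i) = ((n + r - j : ℕ) : ℤ) by omega,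
    show ((n:ℤ) - (i:ℤ)) = ((n - i : ℕ) : ℤ) by omega,
    bc_natCast, bc_natCast, zpow_natCast, zpow_natCast, zpow_natCast, zpow_natCast,
    Nat.choose_symm hin,
    show α ^ ((n - i) + j) = α ^ (n - i) * α ^ j from pow_add α _ _,
    show 2 * n + r - (n - i) - j = i + (n + r - j) by omega,
    show (1 - α) ^ (i + (n + r - j)) = (1 - α) ^ i * (1 - α) ^ (n + r - j) from pow_add _ _ _]
  ring

lemma tail_step {α : ℝ} {r d : ℕ} (hα : α ≠ 0) (hα1 : (1:ℝ) - α ≠ 0)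
    (hd : 1 ≤ d) (hdr : d ≤ r) (n : ℕ) :
    ∑ m ∈ Finset.Icc (((n+1:ℕ):ℤ) + d) (2 * ((n+1:ℕ):ℤ) + r), fdist α r (n+1) m =
      (∑ m ∈ Finset.Icc ((n:ℤ) + d) (2 * (n:ℤ) + r), fdist α r n m) -
        α * (1 - α) * (fdist α r n ((n:ℤ) + d) - fdist α r n ((n:ℤ) + d - 1)) := by
  have hdn : (n:ℤ) + d ≤ 2 * (n:ℤ) + r := by
    have : (d:ℤ) ≤ (r:ℤ) + n := by exact_mod_cast (by omega : d ≤ r + n)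
    omega
  have e0 : ∑ m ∈ Finset.Icc (((n+1:ℕ):ℤ) + d) (2 * ((n+1:ℕ):ℤ) + r), fdist α r (n+1) m =
      ∑ m ∈ Finset.Icc (((n+1:ℕ):ℤ) + d) (2 * ((n+1:ℕ):ℤ) + r),
        (α * (1 - α) * fdist α r n (m - 2) + (α ^ 2 + (1 - α) ^ 2) * fdist α r n (m - 1) +
          α * (1 - α) * fdist α r n m) :=
    Finset.sum_congr rfl fun m _ => fdist_rec hα hα1 r n m
  rw [e0, Finset.sum_add_distrib, Finset.sum_add_distrib, ← Finset.mul_sum, ← Finset.mul_sum,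
    ← Finset.mul_sum]
  have h1 : ∑ m ∈ Finset.Icc (((n+1:ℕ):ℤ) + d) (2 * ((n+1:ℕ):ℤ) + r), fdist α r n (m - 2) =
      fdist α r n ((n:ℤ) + d - 1) + ∑ m ∈ Finset.Icc ((n:ℤ) + d) (2 * (n:ℤ) + r), fdist α r n m := by
    rw [show (((n+1:ℕ):ℤ) + d) = ((n:ℤ) + d - 1) + 2 by push_cast; ring,
      show (2 * ((n+1:ℕ):ℤ) + r) = (2 * (n:ℤ) + r) + 2 by push_cast; ring,
      sum_Icc_shift _ ((n:ℤ) + d - 1) (2 * (n:ℤ) + r) 2]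
    rw [sum_Icc_split_low _ ((n:ℤ) + d - 1) (2 * (n:ℤ) + r) (by omega)]
    rw [show ((n:ℤ) + d - 1) + 2 - 2 = (n:ℤ) + d - 1 by ring]
    congr 1
    rw [show ((n:ℤ) + d - 1) + 1 = (n:ℤ) + d by ring]
    apply Finset.sum_congr rfl
    intro m _
    rw [show m + 2 - 2 = m by ring]
  have h2 : ∑ m ∈ Finset.Icc (((n+1:ℕ):ℤ) + d) (2 * ((n+1:ℕ):ℤ) + r), fdist α r n (m - 1) =
      ∑ m ∈ Finset.Icc ((n:ℤ) + d) (2 * (n:ℤ) + r), fdist α r n m := by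
    rw [show (((n+1:ℕ):ℤ) + d) = ((n:ℤ) + d) + 1 by push_cast; ring,
      show (2 * ((n+1:ℕ):ℤ) + r) = (2 * (n:ℤ) + r + 1) + 1 by push_cast; ring,
      sum_Icc_shift _ ((n:ℤ) + d) (2 * (n:ℤ) + r + 1) 1]
    rw [sum_Icc_split_top _ ((n:ℤ) + d) (2 * (n:ℤ) + r) (by omega)]
    rw [fdist_eq_zero_of_gt (by omega), add_zero]
    apply Finset.sum_congr rfl
    intro m _
    rw [show m + 1 - 1 = m by ring]
  have h3 : ∑ m ∈ Finset.Icc (((n+1:ℕ):ℤ) + d) (2 * ((n+1:ℕ):ℤ) + r), fdist α r n m =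
      (∑ m ∈ Finset.Icc ((n:ℤ) + d) (2 * (n:ℤ) + r), fdist α r n m) - fdist α r n ((n:ℤ) + d) := by
    rw [show (2 * ((n+1:ℕ):ℤ) + r) = (2 * (n:ℤ) + r + 1) + 1 by push_cast; ring,
      sum_Icc_split_top _ _ (2 * (n:ℤ) + r + 1) (by push_cast; omega),
      sum_Icc_split_top _ _ (2 * (n:ℤ) + r) (by push_cast; omega),
      fdist_eq_zero_of_gt (show (2 * (n:ℤ) + r : ℤ) < 2 * (n:ℤ) + r + 1 by omega),
      fdist_eq_zero_of_gt (show (2 * (n:ℤ) + r : ℤ) < 2 * (n:ℤ) + r + 1 + 1 by omega),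
      add_zero, add_zero,
      show (((n+1:ℕ):ℤ) + d) = ((n:ℤ) + d) + 1 by push_cast; ring]
    rw [sum_Icc_split_low (fun m => fdist α r n m) ((n:ℤ) + d) (2 * (n:ℤ) + r) hdn]
    ring
  rw [h1, h2, h3]
  ring

theorem competeProb_decreasing_of_large_alpha (r d : ℕ) (hd : 1 ≤ d) (hrd : 2 * d - 1 ≤ r)
    (α : ℝ) (hα0 : (d : ℝ) / (r + 1) < α) (hα1 : α < 1) :
    ∀ n : ℕ, competeProb α r d (n + 1) < competeProb α r d n := by
  have hαp : 0 < α := alpha_pos hd hα0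
  have h1αp : (0:ℝ) < 1 - α := by linarith
  intro n
  rw [competeProb_eq, competeProb_eq]
  rw [tail_step hαp.ne' h1αp.ne' hd (by omega) n]
  have hstrict := (main_ind hd hrd hα0 hα1 n).2
  have hpos := mul_pos (mul_pos hαp h1αp) (sub_pos.mpr hstrict)
  linarith
end

section
/- If r and d are positive integers with r ≥ 2d, and α satisfies (2d−1)/(2r) < α ≤ d/(r+1), then the sequence p_n^{r,d} is eventually strictly decreasing: there exists N such that p_{n+1}^{r,d} < p_n^{r,d} for all n ≥ N. -/
open Finset Filter Topology

open Real

set_option maxHeartbeats 1000000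

namespace CP

noncomputable def lam (α θ : ℝ) : ℝ := 1 - 2*(α*(1-α))*(1 - Real.cos θ)

noncomputable def hh (α : ℝ) (n : ℕ) (a : ℤ) : ℝ :=
  (1/Real.pi) * ∫ θ in (0:ℝ)..Real.pi, lam α θ ^ n * Real.cos (a * θ)

lemma lam_cont (α : ℝ) : Continuous (lam α) := by
  unfold lam; continuity

lemma cont_integrand (α : ℝ) (n : ℕ) (c : ℝ) :
    Continuous (fun θ : ℝ => lam α θ ^ n * Real.cos (c * θ)) := by
  exact ((lam_cont α).pow n).mul (Real.continuous_cos.comp (continuous_const.mul continuous_id))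

lemma intg (α : ℝ) (n : ℕ) (c : ℝ) :
    IntervalIntegrable (fun θ => lam α θ ^ n * Real.cos (c * θ))
      MeasureTheory.volume 0 Real.pi :=
  (cont_integrand α n c).intervalIntegrable 0 Real.pi

lemma hh_neg (α : ℝ) (n : ℕ) (a : ℤ) : hh α n (-a) = hh α n a := by
  unfold hh
  congr 1
  apply intervalIntegral.integral_congr
  intro θ _
  simp [neg_mul]

lemma hh_zero (α : ℝ) (a : ℤ) : hh α 0 a = if a = 0 then 1 else 0 := by
  unfold hh
  rcases eq_or_ne a 0 with h | h
  · subst h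
    simp [Real.pi_ne_zero]
  · have ha : (a : ℝ) ≠ 0 := by exact_mod_cast h
    have := intervalIntegral.integral_comp_mul_left (a := (0:ℝ)) (b := Real.pi) (fun x => Real.cos x) ha
    rw [if_neg h]
    simp only [pow_zero, one_mul]
    rw [this]
    simp [integral_cos, Real.sin_int_mul_pi a]

lemma key_ptwise (α θ : ℝ) (a : ℝ) :
    lam α θ ^ 1 * Real.cos (a * θ) =
      (α^2 + (1-α)^2) * Real.cos (a*θ)
        + α*(1-α) * (Real.cos ((a-1) * θ) + Real.cos ((a+1) * θ)) := by
  have h1 : (a - 1) * θ = a*θ - θ := by ring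
  have h2 : (a + 1) * θ = a*θ + θ := by ring
  rw [h1, h2, Real.cos_add, Real.cos_sub]
  unfold lam; ring

lemma hh_rec (α : ℝ) (n : ℕ) (a : ℤ) :
    hh α (n+1) a = (α^2 + (1-α)^2) * hh α n a
      + α*(1-α) * (hh α n (a-1) + hh α n (a+1)) := by
  unfold hh
  simp only [Int.cast_sub, Int.cast_add, Int.cast_one]
  have step : (∫ θ in (0:ℝ)..Real.pi, lam α θ ^ (n+1) * Real.cos ((a:ℝ) * θ))
      = ∫ θ in (0:ℝ)..Real.pi,
          ((α^2 + (1-α)^2) * (lam α θ ^ n * Real.cos ((a:ℝ) * θ))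
            + α*(1-α) * ((lam α θ ^ n * Real.cos (((a:ℝ)-1) * θ))
              + lam α θ ^ n * Real.cos (((a:ℝ)+1) * θ))) := by
    apply intervalIntegral.integral_congr
    intro θ _
    have := key_ptwise α θ (a : ℝ)
    calc lam α θ ^ (n+1) * Real.cos ((a:ℝ)*θ)
        = lam α θ ^ n * (lam α θ ^ 1 * Real.cos ((a:ℝ)*θ)) := by ring
      _ = _ := by rw [key_ptwise]; ring
  rw [step, intervalIntegral.integral_add ((intg α n _).const_mul _)
        (((intg α n _).add (intg α n _)).const_mul _),
      intervalIntegral.integral_const_mul, intervalIntegral.integral_const_mul,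
      intervalIntegral.integral_add (intg α n _) (intg α n _)]
  ring


noncomputable def UU (t : ℝ) (n a : ℕ) : ℝ :=
  ∑ i ∈ range (n+1), (n.choose (i+a) : ℝ) * (n.choose i) * t^i

lemma UU_zero (t : ℝ) (a : ℕ) : UU t 0 a = if a = 0 then 1 else 0 := by
  unfold UU
  rcases eq_or_ne a 0 with h | h
  · subst h; simp
  · simp [Nat.choose_eq_zero_of_lt (Nat.pos_of_ne_zero h), h]

lemma UU_vanish (t : ℝ) (n a : ℕ) (h : n < a) : UU t n a = 0 := by
  unfold UU
  apply Finset.sum_eq_zero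
  intro i _
  have : n < i + a := by omega
  simp [Nat.choose_eq_zero_of_lt this]

lemma sum_shift (f : ℕ → ℝ) (n : ℕ) (hf : f (n+1) = 0) :
    ∑ i ∈ range (n+1), f (i+1) = (∑ i ∈ range (n+1), f i) - f 0 := by
  have h2 := Finset.sum_range_succ' f (n+1)
  have h3 := Finset.sum_range_succ f (n+1)
  rw [h3, hf] at h2
  linarith

lemma UU_rec_succ (t : ℝ) (n a : ℕ) :
    UU t (n+1) (a+1) = (1+t) * UU t n (a+1) + UU t n a + t * UU t n (a+2) := by
  have e1 : ∀ i, (((n+1).choose (i+1+(a+1)) : ℝ)) * ((n+1).choose (i+1)) * t^(i+1)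
      = (t * ((n.choose (i+(a+1)) : ℝ) * n.choose i * t^i))
        + ((n.choose (i+1+a) : ℝ) * n.choose (i+1) * t^(i+1))
        + (t * ((n.choose (i+(a+2)) : ℝ) * n.choose i * t^i))
        + ((n.choose (i+1+(a+1)) : ℝ) * n.choose (i+1) * t^(i+1)) := by
    intro i
    have p1 : (n+1).choose (i+1) = n.choose i + n.choose (i+1) := Nat.choose_succ_succ n i
    have p2 : (n+1).choose (i+1+(a+1)) = n.choose (i+(a+1)) + n.choose (i+(a+1)+1) := by
      have : i+1+(a+1) = (i+(a+1))+1 := by omega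
      rw [this]; exact Nat.choose_succ_succ n (i+(a+1))
    rw [p1, p2]
    have e2 : i+1+a = i+(a+1) := by omega
    have e3 : i+(a+2) = i+(a+1)+1 := by omega
    have e4 : i+1+(a+1) = i+(a+1)+1 := by omega
    rw [e2, e3, e4]
    push_cast
    ring
  unfold UU
  rw [Finset.sum_range_succ']
  rw [Finset.sum_congr rfl (fun i _ => e1 i)]
  rw [Finset.sum_add_distrib, Finset.sum_add_distrib, Finset.sum_add_distrib]
  have s1 : ∑ i ∈ range (n+1), t * ((n.choose (i+(a+1)) : ℝ) * n.choose i * t^i)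
      = t * ∑ i ∈ range (n+1), (n.choose (i+(a+1)) : ℝ) * n.choose i * t^i := by
    rw [Finset.mul_sum]
  have s2 : ∑ i ∈ range (n+1), ((n.choose (i+1+a) : ℝ) * n.choose (i+1) * t^(i+1))
      = (∑ i ∈ range (n+1), (n.choose (i+a) : ℝ) * n.choose i * t^i) - (n.choose a : ℝ) := by
    have := sum_shift (fun j => (n.choose (j+a) : ℝ) * n.choose j * t^j) n
      (by simp [Nat.choose_eq_zero_of_lt (by omega : n < n+1)])
    simpa using this
  have s3 : ∑ i ∈ range (n+1), t * ((n.choose (i+(a+2)) : ℝ) * n.choose i * t^i)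
      = t * ∑ i ∈ range (n+1), (n.choose (i+(a+2)) : ℝ) * n.choose i * t^i := by
    rw [Finset.mul_sum]
  have s4 : ∑ i ∈ range (n+1), ((n.choose (i+1+(a+1)) : ℝ) * n.choose (i+1) * t^(i+1))
      = (∑ i ∈ range (n+1), (n.choose (i+(a+1)) : ℝ) * n.choose i * t^i) - (n.choose (a+1) : ℝ) := by
    have := sum_shift (fun j => (n.choose (j+(a+1)) : ℝ) * n.choose j * t^j) n
      (by simp [Nat.choose_eq_zero_of_lt (by omega : n < n+1+(a+1))])
    simpa using this
  rw [s1, s2, s3, s4]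
  have f0 : (((n+1).choose (0+(a+1)) : ℝ)) * ((n+1).choose 0) * t^0
      = (n.choose a : ℝ) + (n.choose (a+1) : ℝ) := by
    have : (n+1).choose (a+1) = n.choose a + n.choose (a+1) := Nat.choose_succ_succ n a
    simp [this]
  rw [f0]
  ring

lemma UU_rec_zero (t : ℝ) (n : ℕ) :
    UU t (n+1) 0 = (1+t) * UU t n 0 + 2*t * UU t n 1 := by
  have e1 : ∀ i, (((n+1).choose (i+1+0) : ℝ)) * ((n+1).choose (i+1)) * t^(i+1)
      = (t * ((n.choose (i+0) : ℝ) * n.choose i * t^i))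
        + (t * ((n.choose (i+1) : ℝ) * n.choose i * t^i))
        + (t * ((n.choose (i+1) : ℝ) * n.choose i * t^i))
        + ((n.choose (i+1+0) : ℝ) * n.choose (i+1) * t^(i+1)) := by
    intro i
    have p1 : (n+1).choose (i+1) = n.choose i + n.choose (i+1) := Nat.choose_succ_succ n i
    simp only [Nat.add_zero]
    rw [p1]
    push_cast
    ring
  unfold UU
  rw [Finset.sum_range_succ']
  rw [Finset.sum_congr rfl (fun i _ => e1 i)]
  rw [Finset.sum_add_distrib, Finset.sum_add_distrib, Finset.sum_add_distrib]
  have s1 : ∑ i ∈ range (n+1), t * ((n.choose (i+0) : ℝ) * n.choose i * t^i)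
      = t * ∑ i ∈ range (n+1), (n.choose (i+0) : ℝ) * n.choose i * t^i := by
    rw [Finset.mul_sum]
  have s2 : ∑ i ∈ range (n+1), t * ((n.choose (i+1) : ℝ) * n.choose i * t^i)
      = t * ∑ i ∈ range (n+1), (n.choose (i+1) : ℝ) * n.choose i * t^i := by
    rw [Finset.mul_sum]
  have s4 : ∑ i ∈ range (n+1), ((n.choose (i+1+0) : ℝ) * n.choose (i+1) * t^(i+1))
      = (∑ i ∈ range (n+1), (n.choose (i+0) : ℝ) * n.choose i * t^i) - 1 := by
    have := sum_shift (fun j => (n.choose (j+0) : ℝ) * n.choose j * t^j) n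
      (by simp [Nat.choose_eq_zero_of_lt (by omega : n < n+1+0)])
    simpa using this
  rw [s1, s2, s4]
  have f0 : (((n+1).choose (0+0) : ℝ)) * ((n+1).choose 0) * t^0 = 1 := by simp
  rw [f0]
  ring

section Link
variable {α : ℝ}

lemma hh_eq_UU (hy : (1:ℝ) - α ≠ 0) (n : ℕ) :
    ∀ a : ℕ, hh α n a = (1-α)^(2*n) * (α/(1-α))^a * UU ((α/(1-α))^2) n a := by
  induction n with
  | zero =>
    intro a
    rw [show ((a:ℤ)) = (a:ℤ) from rfl, hh_zero, UU_zero]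
    rcases eq_or_ne a 0 with h | h
    · subst h; simp
    · have : (a:ℤ) ≠ 0 := by exact_mod_cast h
      simp [h, this]
  | succ n ih =>
    intro a
    match a with
    | 0 =>
      rw [hh_rec]
      have h1 : ((0:ℕ):ℤ) - 1 = -(1:ℤ) := by norm_num
      have h2 : ((0:ℕ):ℤ) + 1 = ((1:ℕ):ℤ) := by norm_num
      rw [h1, h2, show (-(1:ℤ)) = -((1:ℕ):ℤ) by norm_num, hh_neg]
      rw [ih 0, ih 1, UU_rec_zero]
      field_simp
      ring
    | b+1 =>
      rw [hh_rec]
      have h1 : (((b+1:ℕ)):ℤ) - 1 = ((b:ℕ):ℤ) := by push_cast; ring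
      have h2 : (((b+1:ℕ)):ℤ) + 1 = (((b+2:ℕ)):ℤ) := by push_cast; ring
      rw [h1, h2, ih b, ih (b+1), ih (b+2), UU_rec_succ]
      generalize UU ((α/(1-α))^2) n b = U0
      generalize UU ((α/(1-α))^2) n (b+1) = U1
      generalize UU ((α/(1-α))^2) n (b+2) = U2
      have e : α = α/(1-α)*(1-α) := by field_simp
      generalize α/(1-α) = ρ at e ⊢
      linear_combination (1-α)^(2*n)*ρ^b*(ρ*U1*(α+(1-α)*ρ) + (1-α)*U0 + ρ^2*(1-α)*U2) * e

lemma hh_eq_UU' (hy : (1:ℝ) - α ≠ 0) (n : ℕ) (a : ℤ) :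
    hh α n a = (1-α)^(2*n) * (α/(1-α))^(a.natAbs) * UU ((α/(1-α))^2) n a.natAbs := by
  rcases Int.natAbs_eq a with h | h
  · nth_rewrite 1 [h]; exact hh_eq_UU hy n a.natAbs
  · nth_rewrite 1 [h]
    rw [hh_neg]
    exact hh_eq_UU hy n a.natAbs

lemma hh_vanish (hy : (1:ℝ) - α ≠ 0) (n : ℕ) (a : ℤ) (h : n < a.natAbs) :
    hh α n a = 0 := by
  rw [hh_eq_UU' hy, UU_vanish _ _ _ h, mul_zero]

end Link
section QPart
variable {α : ℝ}

noncomputable def QQ (α : ℝ) (r n : ℕ) (k : ℤ) : ℝ :=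
  ∑ j ∈ range (r+1), (r.choose j : ℝ) * α^j * (1-α)^(r-j) * hh α n (k - j)

noncomputable def QS (α : ℝ) (r n k : ℕ) : ℝ :=
  ∑ i ∈ range (n+1), ((n+r).choose (i+k) : ℝ) * (n.choose i) * α^(2*i+k) * (1-α)^(2*n+r - (2*i+k))

lemma QQ_rec (r n : ℕ) (k : ℤ) :
    QQ α r (n+1) k = (α^2+(1-α)^2) * QQ α r n k
      + α*(1-α) * (QQ α r n (k-1) + QQ α r n (k+1)) := by
  unfold QQ
  rw [mul_add, Finset.mul_sum, Finset.mul_sum, Finset.mul_sum, ← Finset.sum_add_distrib,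
    ← Finset.sum_add_distrib]
  apply Finset.sum_congr rfl
  intro j _
  rw [hh_rec α n (k - j), show k - (j:ℤ) - 1 = (k-1) - j by ring,
    show k - (j:ℤ) + 1 = (k+1) - j by ring]
  ring

lemma QQ_vanish (hy : (1:ℝ) - α ≠ 0) (r n : ℕ) (k : ℤ) (h : (n + r : ℤ) < k) :
    QQ α r n k = 0 := by
  unfold QQ
  apply Finset.sum_eq_zero
  intro j hj
  have hj' : (j : ℤ) ≤ r := by exact_mod_cast Nat.le_of_lt_succ (Finset.mem_range.mp hj)
  have h1 : (n : ℤ) < k - j := by omega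
  have h2 : (n : ℕ) < (k - j).natAbs := by
    have := Int.le_natAbs (a := k - j)
    omega
  rw [hh_vanish hy n _ h2, mul_zero]

lemma guard_sum (f : ℕ → ℝ) (b n : ℕ) :
    ∑ i ∈ range (n+1), (if b ≤ i then f i else 0) = ∑ i ∈ Ico b (n+1), f i := by
  rw [Finset.range_eq_Ico]
  rcases le_or_gt b (n+1) with h | h
  · rw [← Finset.sum_Ico_consecutive _ (Nat.zero_le b) h]
    have h1 : ∑ i ∈ Ico 0 b, (if b ≤ i then f i else 0) = 0 := by
      apply Finset.sum_eq_zero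
      intro i hi
      rw [if_neg]
      exact Nat.not_le.2 (Finset.mem_Ico.mp hi).2
    have h2 : ∑ i ∈ Ico b (n+1), (if b ≤ i then f i else 0) = ∑ i ∈ Ico b (n+1), f i := by
      apply Finset.sum_congr rfl
      intro i hi
      exact if_pos (Finset.mem_Ico.mp hi).1
    rw [h1, h2, zero_add]
  · have h1 : Ico b (n+1) = ∅ := Finset.Ico_eq_empty (by omega)
    have h2 : ∑ i ∈ Ico 0 (n+1), (if b ≤ i then f i else 0) = 0 := by
      apply Finset.sum_eq_zero
      intro i hi
      rw [if_neg]
      have := (Finset.mem_Ico.mp hi).2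
      omega
    rw [h1, h2]
    simp

lemma vander (t : ℝ) (n r k : ℕ) :
    ∑ i ∈ range (n+1), ((n+r).choose (i+k) : ℝ) * (n.choose i) * t^i
      = ∑ j ∈ range (r+1), (r.choose j : ℝ) *
          (if j ≤ k then UU t n (k-j) else t^(j-k) * UU t n (j-k)) := by
  have exp : ∀ i : ℕ, ((n+r).choose (i+k) : ℝ)
      = ∑ j ∈ range (r+1), (if j ≤ i+k then (r.choose j : ℝ) * (n.choose (i+k-j)) else 0) := by
    intro i
    have h0 : (n+r).choose (i+k) = (r+n).choose (i+k) := by rw [Nat.add_comm]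
    have hM1 : i+k+1 ≤ i+k+r+1 := by omega
    have hM2 : r+1 ≤ i+k+r+1 := by omega
    have h1 : ((r+n).choose (i+k) : ℝ)
        = ∑ j ∈ range (i+k+1), (if j ≤ i+k then (r.choose j : ℝ) * (n.choose (i+k-j)) else 0) := by
      rw [Nat.add_choose_eq, Finset.Nat.sum_antidiagonal_eq_sum_range_succ_mk]
      push_cast
      apply Finset.sum_congr rfl
      intro j hj
      rw [if_pos (Nat.le_of_lt_succ (Finset.mem_range.mp hj))]
    rw [h0, h1]
    rw [Finset.sum_subset (Finset.range_subset_range.2 hM1) ?h1, ← Finset.sum_subset (Finset.range_subset_range.2 hM2) ?h2]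
    case h1 =>
      intro j _ hj
      rw [if_neg]
      intro hc
      exact hj (Finset.mem_range.mpr (by omega))
    case h2 =>
      intro j _ hj
      have hjr : r < j := by
        by_contra hc
        exact hj (Finset.mem_range.mpr (by omega))
      split_ifs
      · simp [Nat.choose_eq_zero_of_lt hjr]
      · rfl
  calc ∑ i ∈ range (n+1), ((n+r).choose (i+k) : ℝ) * (n.choose i) * t^i
      = ∑ i ∈ range (n+1), ∑ j ∈ range (r+1),
          (if j ≤ i+k then (r.choose j : ℝ) * (n.choose (i+k-j)) * (n.choose i) * t^i else 0) := by
        apply Finset.sum_congr rfl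
        intro i _
        rw [exp i, Finset.sum_mul, Finset.sum_mul]
        apply Finset.sum_congr rfl
        intro j _
        split_ifs
        · ring
        · simp
    _ = ∑ j ∈ range (r+1), ∑ i ∈ range (n+1),
          (if j ≤ i+k then (r.choose j : ℝ) * (n.choose (i+k-j)) * (n.choose i) * t^i else 0) :=
        Finset.sum_comm
    _ = _ := by
        apply Finset.sum_congr rfl
        intro j _
        rcases le_or_gt j k with hjk | hjk
        · rw [if_pos hjk]
          rw [Finset.sum_congr rfl (fun i (_ : i ∈ range (n+1)) => if_pos (by omega : j ≤ i + k))]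
          unfold UU
          rw [Finset.mul_sum]
          apply Finset.sum_congr rfl
          intro i _
          rw [show i+k-j = i+(k-j) by omega]
          ring
        · rw [if_neg (by omega)]
          set b := j - k with hb
          have hguard : ∀ i : ℕ, (j ≤ i+k) ↔ (b ≤ i) := by
            intro i; constructor <;> (intro; omega)
          rw [Finset.sum_congr rfl (fun i (_ : i ∈ range (n+1)) =>
            if_congr (hguard i) rfl rfl)]
          rw [guard_sum (fun i => (r.choose j : ℝ) * (n.choose (i+k-j)) * (n.choose i) * t^i) b n]
          rcases le_or_gt b n with hbn | hbn
          · rw [Finset.sum_Ico_eq_sum_range]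
            have : ∀ i' ∈ range (n+1-b), (r.choose j : ℝ) * (n.choose (b+i'+k-j)) * (n.choose (b+i')) * t^(b+i')
                = (r.choose j : ℝ) * (t^b * ((n.choose (i'+b) : ℝ) * (n.choose i') * t^i')) := by
              intro i' _
              rw [show b+i'+k-j = i' by omega, show b+i' = i'+b by omega, pow_add]
              ring
            rw [Finset.sum_congr rfl this, ← Finset.mul_sum, ← Finset.mul_sum]
            congr 2
            unfold UU
            symm
            rw [← Finset.sum_subset (Finset.range_subset_range.2 (by omega : n+1-b ≤ n+1))]
            intro i' _ hi'
            have : n < i' + b := by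
              have : ¬ i' < n+1-b := fun hc => hi' (Finset.mem_range.mpr hc)
              omega
            simp [Nat.choose_eq_zero_of_lt this]
          · have h1 : Ico b (n+1) = ∅ := Finset.Ico_eq_empty (by omega)
            rw [h1, Finset.sum_empty, UU_vanish t n b hbn]
            ring

lemma powsplit (hy : (1:ℝ)-α ≠ 0) (m M : ℕ) (h : m ≤ M) :
    α^m * (1-α)^(M-m) = (1-α)^M * (α/(1-α))^m := by
  rw [pow_sub₀ (1-α) hy h, div_pow]
  ring

lemma QQ_eq_QS (hα : 0 < α) (hy : (1:ℝ)-α ≠ 0) (r n k : ℕ) :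
    QQ α r n (k:ℤ) = QS α r n k := by
  have hα' : α ≠ 0 := ne_of_gt hα
  set ρ : ℝ := α/(1-α) with hρ
  have hρ0 : ρ ≠ 0 := div_ne_zero hα' hy
  set t : ℝ := ρ^2 with ht
  have s1 : QS α r n k
      = (1-α)^(2*n+r) * (ρ^k * (∑ i ∈ range (n+1), ((n+r).choose (i+k) : ℝ) * (n.choose i) * t^i)) := by
    unfold QS
    rw [Finset.mul_sum, Finset.mul_sum]
    apply Finset.sum_congr rfl
    intro i hi
    have hin : i ≤ n := Nat.le_of_lt_succ (Finset.mem_range.mp hi)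
    rcases le_or_gt (i+k) (n+r) with hik | hik
    · have h2 : 2*i+k ≤ 2*n+r := by omega
      have e : α^(2*i+k) * (1-α)^(2*n+r-(2*i+k)) = (1-α)^(2*n+r) * ρ^(2*i+k) :=
        powsplit hy _ _ h2
      have e2 : ρ^(2*i+k) = ρ^k * t^i := by
        rw [ht, ← pow_mul, ← pow_add]
        congr 1
        omega
      calc ((n+r).choose (i+k) : ℝ) * (n.choose i) * α^(2*i+k) * (1-α)^(2*n+r-(2*i+k))
          = ((n+r).choose (i+k) : ℝ) * (n.choose i) * (α^(2*i+k) * (1-α)^(2*n+r-(2*i+k))) := by ring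
        _ = ((n+r).choose (i+k) : ℝ) * (n.choose i) * ((1-α)^(2*n+r) * (ρ^k * t^i)) := by
            rw [e, e2]
        _ = (1-α)^(2*n+r) * (ρ^k * (((n+r).choose (i+k) : ℝ) * (n.choose i) * t^i)) := by ring
    · rw [Nat.choose_eq_zero_of_lt hik]
      simp
  rw [s1, vander]
  unfold QQ
  rw [Finset.mul_sum, Finset.mul_sum]
  apply Finset.sum_congr rfl
  intro j hj
  have hjr : j ≤ r := Nat.le_of_lt_succ (Finset.mem_range.mp hj)
  rcases le_or_gt j k with hjk | hjk
  · rw [if_pos hjk]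
    have hcast : (k:ℤ) - j = ((k-j : ℕ) : ℤ) := by push_cast; omega
    rw [hcast, hh_eq_UU hy n (k-j), ← hρ, ← ht]
    generalize UU t n (k-j) = S
    rw [pow_sub₀ (1-α) hy hjr, pow_sub₀ ρ hρ0 hjk]
    rw [show (1-α)^(2*n) = ((1-α)^2)^n from by rw [pow_mul],
        show (1-α)^(2*n+r) = ((1-α)^2)^n * (1-α)^r from by rw [pow_add, pow_mul]]
    rw [show α^j = ρ^j * (1-α)^j from by rw [hρ, div_pow]; field_simp]
    field_simp
  · rw [if_neg (by omega)]
    have hcast : (k:ℤ) - j = -(((j-k : ℕ) : ℕ) : ℤ) := by push_cast; omega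
    rw [hcast, hh_neg, hh_eq_UU hy n (j-k), ← hρ, ← ht]
    generalize UU t n (j-k) = S
    have e1 : t^(j-k) = t^j / t^k := pow_sub₀ t (pow_ne_zero 2 hρ0) (le_of_lt hjk)
    have e2 : ρ^(j-k) = ρ^j / ρ^k := pow_sub₀ ρ hρ0 (le_of_lt hjk)
    rw [pow_sub₀ (1-α) hy hjr, e1, e2, ht]
    rw [show (1-α)^(2*n) = ((1-α)^2)^n from by rw [pow_mul],
        show (1-α)^(2*n+r) = ((1-α)^2)^n * (1-α)^r from by rw [pow_add, pow_mul]]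
    rw [show α^j = ρ^j * (1-α)^j from by rw [hρ, div_pow]; field_simp]
    field_simp
    ring

noncomputable def Pdef (α : ℝ) (r d n : ℕ) : ℝ :=
  ∑ m ∈ range (n+r+1), QQ α r n ((d:ℤ)+m)

lemma QS_vanish (r n k : ℕ) (h : n + r < k) : QS α r n k = 0 := by
  unfold QS
  apply Finset.sum_eq_zero
  intro i _
  rw [Nat.choose_eq_zero_of_lt (by omega : n + r < i + k)]
  simp

lemma compete_eq (hα : 0 < α) (hy : (1:ℝ)-α ≠ 0) (r d n : ℕ) :
    competeProb α r d n = Pdef α r d n := by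
  unfold competeProb Pdef
  have step1 : ∀ i ∈ range (n+1),
      (∑ j ∈ Finset.Icc (i+d) (n+r), ((n+r).choose j : ℝ) * (n.choose i : ℝ) * α^(i+j) * (1-α)^(2*n+r-i-j))
      = ∑ k ∈ Finset.Icc d (n+r), ((n+r).choose (k+i) : ℝ) * (n.choose i : ℝ) * α^(i+(k+i)) * (1-α)^(2*n+r-i-(k+i)) := by
    intro i hi
    have hin : i ≤ n := Nat.le_of_lt_succ (Finset.mem_range.mp hi)
    have hmap : Finset.Icc (i+d) (n+r) = (Finset.Icc d (n+r-i)).map (addRightEmbedding i) := by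
      rw [Finset.map_add_right_Icc, Nat.sub_add_cancel (by omega : i ≤ n+r), Nat.add_comm d i]
    rw [hmap, Finset.sum_map]
    simp only [addRightEmbedding_apply]
    apply Finset.sum_subset (Finset.Icc_subset_Icc_right (by omega : n+r-i ≤ n+r))
    intro k hk hk'
    have h1 := Finset.mem_Icc.mp hk
    have h2 : ¬ (d ≤ k ∧ k ≤ n+r-i) := fun hc => hk' (Finset.mem_Icc.mpr hc)
    have : n + r < k + i := by omega
    rw [Nat.choose_eq_zero_of_lt this]
    simp
  rw [Finset.sum_congr rfl step1, Finset.sum_comm]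
  have step3 : ∀ k ∈ Finset.Icc d (n+r),
      (∑ i ∈ range (n+1), ((n+r).choose (k+i) : ℝ) * (n.choose i : ℝ) * α^(i+(k+i)) * (1-α)^(2*n+r-i-(k+i)))
      = QS α r n k := by
    intro k _
    unfold QS
    apply Finset.sum_congr rfl
    intro i _
    rw [show k+i = i+k by omega, show i+(i+k) = 2*i+k by omega,
        show 2*n+r-i-(i+k) = 2*n+r-(2*i+k) by omega]
  rw [Finset.sum_congr rfl step3]
  rw [← Finset.Ico_add_one_right_eq_Icc, Finset.sum_Ico_eq_sum_range]
  have step5 : ∑ m ∈ range (n+r+1), QS α r n (d+m)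
      = ∑ m ∈ range (n+r+1-d), QS α r n (d+m) := by
    symm
    apply Finset.sum_subset (Finset.range_subset_range.2 (by omega))
    intro m hm hm'
    have h1 : m < n+r+1 := Finset.mem_range.mp hm
    have h2 : ¬ m < n+r+1-d := fun hc => hm' (Finset.mem_range.mpr hc)
    exact QS_vanish r n (d+m) (by omega)
  rw [show n+r+1-d = n+r+1-d from rfl, ← step5]
  apply Finset.sum_congr rfl
  intro m _
  rw [show (d:ℤ)+m = ((d+m : ℕ) : ℤ) from by push_cast; ring]
  exact (QQ_eq_QS hα hy r n (d+m)).symm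

lemma P_diff (hα : 0 < α) (hy : (1:ℝ)-α ≠ 0) (r d n : ℕ) (hd : 1 ≤ d) :
    Pdef α r d (n+1) = Pdef α r d n
      + α*(1-α) * (QQ α r n ((d:ℤ)-1) - QQ α r n (d:ℤ)) := by
  have hv : ∀ m : ℕ, (n + r : ℤ) < m → QQ α r n ((d:ℤ)+m-d) = QQ α r n (m:ℤ) := by
    intro m _; congr 1; ring
  unfold Pdef
  rw [show n+1+r+1 = (n+r+1)+1 from by omega]
  rw [Finset.sum_congr rfl (fun m (_ : m ∈ range ((n+r+1)+1)) => QQ_rec r n ((d:ℤ)+m))]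
  rw [Finset.sum_add_distrib, ← Finset.mul_sum, ← Finset.mul_sum, Finset.sum_add_distrib]
  have hA : ∑ m ∈ range ((n+r+1)+1), QQ α r n ((d:ℤ)+m)
      = ∑ m ∈ range (n+r+1), QQ α r n ((d:ℤ)+m) := by
    rw [Finset.sum_range_succ, QQ_vanish hy r n _ (by push_cast; omega), add_zero]
  have hB : ∑ m ∈ range ((n+r+1)+1), QQ α r n ((d:ℤ)+m-1)
      = QQ α r n ((d:ℤ)-1) + ∑ m ∈ range (n+r+1), QQ α r n ((d:ℤ)+m) := by
    rw [Finset.sum_range_succ']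
    rw [Finset.sum_congr rfl (fun m (_ : m ∈ range (n+r+1)) => by
      rw [show (d:ℤ)+((m+1:ℕ):ℤ)-1 = (d:ℤ)+m from by push_cast; ring])]
    rw [show (d:ℤ)+((0:ℕ):ℤ)-1 = (d:ℤ)-1 from by push_cast; ring]
    ring
  have hC : ∑ m ∈ range ((n+r+1)+1), QQ α r n ((d:ℤ)+m+1)
      = (∑ m ∈ range (n+r+1), QQ α r n ((d:ℤ)+m)) - QQ α r n (d:ℤ) := by
    have e1 : ∑ m ∈ range (n+r+1), QQ α r n ((d:ℤ)+m)
        = QQ α r n (d:ℤ) + ∑ m ∈ range (n+r), QQ α r n ((d:ℤ)+m+1) := by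
      rw [Finset.sum_range_succ']
      rw [Finset.sum_congr rfl (fun m (_ : m ∈ range (n+r)) => by
        rw [show (d:ℤ)+((m+1:ℕ):ℤ) = (d:ℤ)+m+1 from by push_cast; ring])]
      rw [show (d:ℤ)+((0:ℕ):ℤ) = (d:ℤ) from by push_cast; ring]
      ring
    rw [Finset.sum_range_succ, Finset.sum_range_succ]
    rw [QQ_vanish hy r n ((d:ℤ)+((n+r+1:ℕ):ℤ)+1) (by push_cast; omega),
        QQ_vanish hy r n ((d:ℤ)+((n+r:ℕ):ℤ)+1) (by push_cast; omega)]
    rw [e1]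
    ring
  rw [hA, hB, hC]
  have : (α^2+(1-α)^2) = 1 - 2*(α*(1-α)) := by ring
  rw [this]
  ring

noncomputable def psi (α : ℝ) (r d : ℕ) (θ : ℝ) : ℝ :=
  ∑ j ∈ range (r+1), (r.choose j : ℝ) * α^j * (1-α)^(r-j) * Real.sin (((j:ℝ) - d + 1/2)*θ)

lemma psi_cont (r d : ℕ) : Continuous (psi α r d) := by
  unfold psi
  apply continuous_finset_sum
  intro j _
  exact continuous_const.mul ((Real.continuous_sin).comp (continuous_const.mul continuous_id))

lemma cont_main (r d n : ℕ) :
    Continuous (fun θ : ℝ => lam α θ ^ n * (Real.sin (θ/2) * psi α r d θ)) := by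
  apply ((lam_cont α).pow n).mul
  apply Continuous.mul _ (psi_cont r d)
  exact Real.continuous_sin.comp (continuous_id.div_const 2)

lemma intg_main (r d n : ℕ) :
    IntervalIntegrable (fun θ : ℝ => lam α θ ^ n * (Real.sin (θ/2) * psi α r d θ))
      MeasureTheory.volume 0 Real.pi :=
  (cont_main r d n).intervalIntegrable 0 Real.pi

lemma Qdiff_int (r d n : ℕ) :
    QQ α r n (d:ℤ) - QQ α r n ((d:ℤ)-1)
      = (2/Real.pi) * ∫ θ in (0:ℝ)..Real.pi, lam α θ^n * (Real.sin (θ/2) * psi α r d θ) := by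
  unfold QQ
  rw [← Finset.sum_sub_distrib]
  have perj : ∀ j ∈ range (r+1),
      (r.choose j : ℝ) * α^j * (1-α)^(r-j) * hh α n ((d:ℤ) - j)
        - (r.choose j : ℝ) * α^j * (1-α)^(r-j) * hh α n ((d:ℤ)-1 - j)
      = (2/Real.pi) * ∫ θ in (0:ℝ)..Real.pi,
          lam α θ^n * (Real.sin (θ/2)
            * ((r.choose j : ℝ) * α^j * (1-α)^(r-j) * Real.sin (((j:ℝ) - d + 1/2)*θ))) := by
    intro j _
    unfold hh
    set c := (r.choose j : ℝ) * α^j * (1-α)^(r-j) with hc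
    rw [← mul_sub, ← mul_sub, ← intervalIntegral.integral_sub (intg α n _) (intg α n _)]
    have ptw : ∀ θ ∈ Set.uIcc (0:ℝ) Real.pi,
        lam α θ^n * Real.cos ((((d:ℤ) - j : ℤ) : ℝ) * θ) - lam α θ^n * Real.cos ((((d:ℤ)-1 - j : ℤ) : ℝ) * θ)
          = 2 * (lam α θ^n * (Real.sin (θ/2) * Real.sin (((j:ℝ) - d + 1/2)*θ))) := by
      intro θ _
      have hA : (((d:ℤ) - j : ℤ) : ℝ) = ((d:ℝ) - j) := by push_cast; ring
      have hB : (((d:ℤ)-1 - j : ℤ) : ℝ) = ((d:ℝ) - j - 1) := by push_cast; ring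
      rw [hA, hB, ← mul_sub, Real.cos_sub_cos]
      have e1 : (((d:ℝ) - j)*θ + ((d:ℝ) - j - 1)*θ)/2 = ((d:ℝ) - j - 1/2)*θ := by ring
      have e2 : (((d:ℝ) - j)*θ - ((d:ℝ) - j - 1)*θ)/2 = θ/2 := by ring
      rw [e1, e2]
      have e3 : ((d:ℝ) - j - 1/2) = -(((j:ℝ) - d + 1/2)) := by ring
      rw [e3, show (-(((j:ℝ) - d + 1/2)))*θ = -((((j:ℝ) - d + 1/2))*θ) from by ring,
        Real.sin_neg]
      ring
    rw [intervalIntegral.integral_congr ptw]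
    rw [intervalIntegral.integral_const_mul]
    have : ∀ θ:ℝ, lam α θ^n * (Real.sin (θ/2) * (c * Real.sin (((j:ℝ) - d + 1/2)*θ)))
        = c * (lam α θ^n * (Real.sin (θ/2) * Real.sin (((j:ℝ) - d + 1/2)*θ))) := by
      intro θ; ring
    rw [intervalIntegral.integral_congr (fun θ _ => this θ), intervalIntegral.integral_const_mul]
    field_simp
    ring
    congr 1
    apply intervalIntegral.integral_congr
    intro x _
    ring_nf
  rw [Finset.sum_congr rfl perj, ← Finset.mul_sum]
  congr 1
  rw [← intervalIntegral.integral_finset_sum]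
  · apply intervalIntegral.integral_congr
    intro θ _
    unfold psi
    dsimp only
    rw [Finset.mul_sum, Finset.mul_sum]
  · intro j _
    apply Continuous.intervalIntegrable
    apply ((lam_cont α).pow n).mul
    apply Continuous.mul
    · exact Real.continuous_sin.comp (continuous_id.div_const 2)
    · exact continuous_const.mul ((Real.continuous_sin).comp (continuous_const.mul continuous_id))

section Moments
variable {α : ℝ}

lemma binom_sum_one (r : ℕ) :
    ∑ j ∈ range (r+1), (r.choose j : ℝ) * α^j * (1-α)^(r-j) = 1 := by
  conv_rhs => rw [show (1:ℝ) = (α+(1-α))^r by rw [show α+(1-α) = (1:ℝ) by ring, one_pow]]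
  rw [add_pow]
  apply Finset.sum_congr rfl
  intro j _
  ring

lemma binom_mean (r : ℕ) :
    ∑ j ∈ range (r+1), (j:ℝ) * ((r.choose j : ℝ) * α^j * (1-α)^(r-j)) = r * α := by
  match r with
  | 0 => simp
  | s+1 =>
    rw [Finset.sum_range_succ']
    simp only [Nat.cast_zero, zero_mul, add_zero]
    have perm : ∀ i ∈ range (s+1), ((i+1 : ℕ):ℝ) * (((s+1).choose (i+1) : ℝ) * α^(i+1) * (1-α)^(s+1-(i+1)))
        = ((s+1:ℕ):ℝ) * α * ((s.choose i : ℝ) * α^i * (1-α)^(s-i)) := by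
      intro i _
      have h := Nat.add_one_mul_choose_eq s i
      have hcast : ((s+1 : ℕ) : ℝ) * (s.choose i : ℝ) = ((s+1).choose (i+1) : ℝ) * ((i+1 : ℕ) : ℝ) := by
        exact_mod_cast congrArg (Nat.cast : ℕ → ℝ) h
      have hexp : s+1-(i+1) = s-i := by omega
      rw [hexp]
      have : ((i+1:ℕ):ℝ) * (((s+1).choose (i+1) : ℝ)) = ((s+1:ℕ):ℝ) * (s.choose i : ℝ) := by
        rw [hcast]; ring
      calc ((i+1 : ℕ):ℝ) * (((s+1).choose (i+1) : ℝ) * α^(i+1) * (1-α)^(s-i))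
          = (((i+1:ℕ):ℝ) * ((s+1).choose (i+1) : ℝ)) * α^(i+1) * (1-α)^(s-i) := by ring
        _ = (((s+1:ℕ):ℝ) * (s.choose i : ℝ)) * α^(i+1) * (1-α)^(s-i) := by rw [this]
        _ = ((s+1:ℕ):ℝ) * α * ((s.choose i : ℝ) * α^i * (1-α)^(s-i)) := by
            rw [pow_succ]; ring
    rw [Finset.sum_congr rfl perm, ← Finset.mul_sum, binom_sum_one s]
    push_cast
    ring

lemma psi_moment (r d : ℕ) :
    ∑ j ∈ range (r+1), ((r.choose j : ℝ) * α^j * (1-α)^(r-j)) * ((j:ℝ) - d + 1/2)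
      = r * α - d + 1/2 := by
  have e : ∀ j ∈ range (r+1), ((r.choose j : ℝ) * α^j * (1-α)^(r-j)) * ((j:ℝ) - d + 1/2)
      = (j:ℝ) * ((r.choose j : ℝ) * α^j * (1-α)^(r-j))
        + ((1:ℝ)/2 - d) * ((r.choose j : ℝ) * α^j * (1-α)^(r-j)) := by
    intro j _; ring
  rw [Finset.sum_congr rfl e, Finset.sum_add_distrib, ← Finset.mul_sum, binom_mean, binom_sum_one]
  ring

end Moments

section Analysis
variable {α : ℝ}

lemma lam_pos (hα : 0 < α) (hα2 : α < 1/2) (θ : ℝ) : 0 < lam α θ := by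
  unfold lam
  have h1 := Real.neg_one_le_cos θ
  have h2 := Real.cos_le_one θ
  have hp : 0 < α*(1-α) := by nlinarith
  have h3 : α*(1-α)*(1-Real.cos θ) ≤ α*(1-α)*2 :=
    mul_le_mul_of_nonneg_left (by linarith) hp.le
  have h5 : (0:ℝ) < 1-2*α := by linarith
  have h4 : 0 < (1-2*α)^2 := by positivity
  nlinarith [h3, h4]

lemma lam_anti (hα : 0 < α) (hα2 : α < 1/2) {θ1 θ2 : ℝ} (h1 : 0 ≤ θ1) (h12 : θ1 ≤ θ2)
    (h2 : θ2 ≤ Real.pi) : lam α θ2 ≤ lam α θ1 := by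
  have hc : Real.cos θ2 ≤ Real.cos θ1 :=
    Real.strictAntiOn_cos.antitoneOn ⟨h1, h12.trans h2⟩ ⟨h1.trans h12, h2⟩ h12
  have hp : 0 < α*(1-α) := by nlinarith
  unfold lam
  nlinarith [mul_le_mul_of_nonneg_left hc hp.le]

lemma lam_strict (hα : 0 < α) (hα2 : α < 1/2) {θ1 θ2 : ℝ} (h1 : 0 ≤ θ1) (h12 : θ1 < θ2)
    (h2 : θ2 ≤ Real.pi) : lam α θ2 < lam α θ1 := by
  have hc : Real.cos θ2 < Real.cos θ1 :=
    Real.strictAntiOn_cos ⟨h1, h12.le.trans h2⟩ ⟨h1.trans h12.le, h2⟩ h12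
  have hp : 0 < α*(1-α) := by nlinarith
  unfold lam
  nlinarith [mul_lt_mul_of_pos_left hc hp]

lemma sin_lb {β B θ : ℝ} (hβ : |β| ≤ B) (h0 : 0 ≤ θ) (h1 : θ*B ≤ 1) :
    β*θ - B^3*θ^3/4 ≤ Real.sin (β*θ) := by
  have hB : 0 ≤ B := le_trans (abs_nonneg β) hβ
  have hcube : 0 ≤ B^3*θ^3/4 := by positivity
  rcases lt_trichotomy (β*θ) 0 with h | h | h
  · have hx : 0 < -(β*θ) := by linarith
    have hs := Real.sin_lt hx
    rw [Real.sin_neg] at hs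
    linarith
  · rw [h, Real.sin_zero]
    linarith
  · have hβB : β ≤ B := le_trans (le_abs_self β) hβ
    have hbB : β*θ ≤ B*θ := mul_le_mul_of_nonneg_right hβB h0
    have hb1 : β*θ ≤ 1 := by nlinarith
    have hs := Real.sin_gt_sub_cube h
    have hc : (β*θ)^3 ≤ B^3*θ^3 := by
      calc (β*θ)^3 ≤ (B*θ)^3 := pow_le_pow_left₀ h.le hbB 3
        _ = B^3*θ^3 := by ring
    linarith

lemma psi_lower (hα : 0 < α) (hα2 : α < 1/2) (r d : ℕ) {θ : ℝ} (h0 : 0 ≤ θ)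
    (hθ : θ * ((r:ℝ)+d+1) ≤ 1) :
    θ * ((r:ℝ)*α - d + 1/2) - ((r:ℝ)+d+1)^3 * θ^3/4 ≤ psi α r d θ := by
  set B := ((r:ℝ)+d+1) with hB
  have hy : (0:ℝ) < 1 - α := by linarith
  have per : ∀ j ∈ range (r+1),
      ((r.choose j : ℝ) * α^j * (1-α)^(r-j)) * (((j:ℝ) - d + 1/2)*θ)
        - ((r.choose j : ℝ) * α^j * (1-α)^(r-j)) * (B^3*θ^3/4)
      ≤ (r.choose j : ℝ) * α^j * (1-α)^(r-j) * Real.sin (((j:ℝ) - d + 1/2)*θ) := by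
    intro j hj
    have hjr : j ≤ r := Nat.le_of_lt_succ (Finset.mem_range.mp hj)
    have hc : 0 ≤ (r.choose j : ℝ) * α^j * (1-α)^(r-j) := by positivity
    have habs : |((j:ℝ) - d + 1/2)| ≤ B := by
      rw [abs_le]
      constructor
      · have : (0:ℝ) ≤ (j:ℝ) := Nat.cast_nonneg j
        have : (0:ℝ) ≤ (r:ℝ) := Nat.cast_nonneg r
        rw [hB]; push_cast; linarith [Nat.cast_nonneg d (α := ℝ), Nat.cast_nonneg j (α := ℝ), Nat.cast_nonneg r (α := ℝ)]
      · have hjr' : (j:ℝ) ≤ r := Nat.cast_le.mpr hjr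
        rw [hB]; linarith [Nat.cast_nonneg d (α := ℝ)]
    have hsl := sin_lb habs h0 hθ
    have h7 := mul_le_mul_of_nonneg_left hsl hc
    nlinarith [h7]
  have hsum := Finset.sum_le_sum per
  rw [Finset.sum_sub_distrib] at hsum
  have e1 : ∑ j ∈ range (r+1), ((r.choose j : ℝ) * α^j * (1-α)^(r-j)) * (((j:ℝ) - d + 1/2)*θ)
      = θ * ((r:ℝ)*α - d + 1/2) := by
    have : ∀ j ∈ range (r+1), ((r.choose j : ℝ) * α^j * (1-α)^(r-j)) * (((j:ℝ) - d + 1/2)*θ)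
        = (((r.choose j : ℝ) * α^j * (1-α)^(r-j)) * (((j:ℝ) - d + 1/2))) * θ := by
      intro j _; ring
    rw [Finset.sum_congr rfl this, ← Finset.sum_mul, psi_moment]
    ring
  have e2 : ∑ j ∈ range (r+1), ((r.choose j : ℝ) * α^j * (1-α)^(r-j)) * (B^3*θ^3/4)
      = B^3*θ^3/4 := by
    rw [← Finset.sum_mul, binom_sum_one, one_mul]
  rw [e1, e2] at hsum
  exact hsum

lemma psi_abs_le_one (hα : 0 < α) (hα2 : α < 1/2) (r d : ℕ) (θ : ℝ) :
    |psi α r d θ| ≤ 1 := by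
  have hy : (0:ℝ) < 1 - α := by linarith
  unfold psi
  refine le_trans (Finset.abs_sum_le_sum_abs _ _) ?_
  have per : ∀ j ∈ range (r+1),
      |(r.choose j : ℝ) * α^j * (1-α)^(r-j) * Real.sin (((j:ℝ) - d + 1/2)*θ)|
        ≤ (r.choose j : ℝ) * α^j * (1-α)^(r-j) := by
    intro j _
    rw [abs_mul]
    have hc : 0 ≤ (r.choose j : ℝ) * α^j * (1-α)^(r-j) := by positivity
    rw [abs_of_nonneg hc]
    calc ((r.choose j : ℝ) * α^j * (1-α)^(r-j)) * |Real.sin (((j:ℝ) - d + 1/2)*θ)|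
        ≤ ((r.choose j : ℝ) * α^j * (1-α)^(r-j)) * 1 :=
          mul_le_mul_of_nonneg_left (Real.abs_sin_le_one _) hc
      _ = _ := mul_one _
  refine le_trans (Finset.sum_le_sum per) ?_
  rw [binom_sum_one]

lemma integral_pos (hα : 0 < α) (hα2 : α < 1/2) (r d : ℕ)
    (hm : 0 < (r:ℝ)*α - d + 1/2) :
    ∃ N : ℕ, ∀ n : ℕ, N ≤ n →
      0 < ∫ θ in (0:ℝ)..Real.pi, lam α θ^n * (Real.sin (θ/2) * psi α r d θ) := by
  set m := (r:ℝ)*α - d + 1/2 with hmdef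
  set B := ((r:ℝ)+d+1) with hB
  have hB1 : (1:ℝ) ≤ B := by
    rw [hB]; linarith [Nat.cast_nonneg d (α := ℝ), Nat.cast_nonneg r (α := ℝ)]
  have hB0 : (0:ℝ) < B := by linarith
  have hπ := Real.pi_gt_three
  set δ := min (1/B) (Real.sqrt (2*m/B^3)) with hδdef
  have hδ0 : 0 < δ := by
    apply lt_min
    · positivity
    · rw [Real.sqrt_pos]; positivity
  have hδB : δ * B ≤ 1 := by
    have h1 : δ ≤ 1/B := min_le_left _ _
    calc δ * B ≤ (1/B) * B := mul_le_mul_of_nonneg_right h1 hB0.le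
      _ = 1 := by field_simp
  have hδ1 : δ ≤ 1 := by
    have h1 : δ ≤ 1/B := min_le_left _ _
    have : 1/B ≤ 1 := by
      rw [div_le_one hB0]; exact hB1
    linarith
  have hδπ : δ ≤ Real.pi := by linarith
  -- ψ lower bound on [0,δ]
  have hpsi : ∀ θ : ℝ, 0 ≤ θ → θ ≤ δ → θ*(m/2) ≤ psi α r d θ := by
    intro θ h0 h1
    have hθB : θ*B ≤ 1 := by
      calc θ*B ≤ δ*B := mul_le_mul_of_nonneg_right h1 hB0.le
        _ ≤ 1 := hδB
    have hlow := psi_lower hα hα2 r d h0 hθB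
    rw [← hB, ← hmdef] at hlow
    have hθ2 : θ^2 ≤ 2*m/B^3 := by
      have h2 : δ ≤ Real.sqrt (2*m/B^3) := min_le_right _ _
      have h3 : θ ≤ Real.sqrt (2*m/B^3) := h1.trans h2
      have h4 : θ^2 ≤ (Real.sqrt (2*m/B^3))^2 := pow_le_pow_left₀ h0 h3 2
      rw [Real.sq_sqrt (by positivity)] at h4
      exact h4
    have key : B^3*θ^3/4 ≤ θ*(m/2) := by
      have e : B^3*θ^3/4 = (B^3*θ^2)*θ/4 := by ring
      have h5 : B^3*θ^2 ≤ B^3*(2*m/B^3) := mul_le_mul_of_nonneg_left hθ2 (by positivity)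
      have h6 : B^3*(2*m/B^3) = 2*m := by field_simp
      rw [e]
      calc (B^3*θ^2)*θ/4 ≤ (2*m)*θ/4 := by nlinarith
        _ = θ*(m/2) := by ring
    linarith
  -- nonnegativity on [0,δ]
  have hnn : ∀ n : ℕ, ∀ θ ∈ Set.Icc (0:ℝ) δ,
      0 ≤ lam α θ^n * (Real.sin (θ/2) * psi α r d θ) := by
    intro n θ hθ
    obtain ⟨h0, h1⟩ := hθ
    have hl : 0 ≤ lam α θ^n := (pow_pos (lam_pos hα hα2 θ) n).le
    have hs : 0 ≤ Real.sin (θ/2) :=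
      Real.sin_nonneg_of_nonneg_of_le_pi (by linarith) (by linarith)
    have hp : 0 ≤ psi α r d θ :=
      le_trans (mul_nonneg h0 (div_nonneg hm.le (by norm_num : (0:ℝ) ≤ 2))) (hpsi θ h0 h1)
    positivity
  set L1 := lam α (3*δ/4) with hL1
  set L2 := lam α δ with hL2
  have hL1pos : 0 < L1 := lam_pos hα hα2 _
  have hL2pos : 0 < L2 := lam_pos hα hα2 _
  have hL21 : L2 < L1 := lam_strict hα hα2 (by linarith) (by linarith) hδπ
  have hKs : 0 < Real.sin (δ/4) := Real.sin_pos_of_pos_of_lt_pi (by linarith) (by linarith)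
  set K := Real.sin (δ/4) * ((δ/2)*(m/2)) with hK
  have hKpos : 0 < K := by positivity
  set c1 := (δ/4)*K with hc1
  have hc1pos : 0 < c1 := by positivity
  have htend : Tendsto (fun n : ℕ => (L2/L1)^n) atTop (𝓝 0) :=
    tendsto_pow_atTop_nhds_zero_of_lt_one (by positivity) ((div_lt_one hL1pos).mpr hL21)
  have hev : ∀ᶠ n : ℕ in atTop, (L2/L1)^n < c1/Real.pi :=
    htend.eventually_lt_const (by positivity)
  obtain ⟨N, hN⟩ := Filter.eventually_atTop.mp hev
  refine ⟨N, fun n hn => ?_⟩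
  have hratio := hN n hn
  have hmain : c1 * L1^n - Real.pi * L2^n > 0 := by
    have hL1n : 0 < L1^n := pow_pos hL1pos n
    rw [div_pow] at hratio
    rw [div_lt_div_iff₀ hL1n (by linarith : (0:ℝ) < Real.pi)] at hratio
    linarith
  -- split integral
  have i1 : IntervalIntegrable (fun θ : ℝ => lam α θ^n * (Real.sin (θ/2) * psi α r d θ))
      MeasureTheory.volume 0 (δ/2) := (cont_main r d n).intervalIntegrable _ _
  have i2 : IntervalIntegrable (fun θ : ℝ => lam α θ^n * (Real.sin (θ/2) * psi α r d θ))
      MeasureTheory.volume (δ/2) (3*δ/4) := (cont_main r d n).intervalIntegrable _ _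
  have i3 : IntervalIntegrable (fun θ : ℝ => lam α θ^n * (Real.sin (θ/2) * psi α r d θ))
      MeasureTheory.volume (3*δ/4) δ := (cont_main r d n).intervalIntegrable _ _
  have i4 : IntervalIntegrable (fun θ : ℝ => lam α θ^n * (Real.sin (θ/2) * psi α r d θ))
      MeasureTheory.volume δ Real.pi := (cont_main r d n).intervalIntegrable _ _
  have split1 := intervalIntegral.integral_add_adjacent_intervals i2 i3
  have split2 := intervalIntegral.integral_add_adjacent_intervals i1 (i2.trans i3)
  have split3 := intervalIntegral.integral_add_adjacent_intervals (i1.trans (i2.trans i3)) i4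
  -- bounds
  have b1 : 0 ≤ ∫ θ in (0:ℝ)..(δ/2), lam α θ^n * (Real.sin (θ/2) * psi α r d θ) := by
    apply intervalIntegral.integral_nonneg (by linarith)
    intro u hu
    obtain ⟨hu1, hu2⟩ := hu
    exact hnn n u ⟨hu1, by linarith⟩
  have b3 : 0 ≤ ∫ θ in (3*δ/4)..δ, lam α θ^n * (Real.sin (θ/2) * psi α r d θ) := by
    apply intervalIntegral.integral_nonneg (by linarith)
    intro u hu
    obtain ⟨hu1, hu2⟩ := hu
    exact hnn n u ⟨by linarith, hu2⟩
  have b2 : (δ/4) * (L1^n * K) ≤ ∫ θ in (δ/2)..(3*δ/4), lam α θ^n * (Real.sin (θ/2) * psi α r d θ) := by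
    have hconst : (∫ _ in (δ/2)..(3*δ/4), (L1^n * K : ℝ)) = (δ/4) * (L1^n*K) := by
      rw [intervalIntegral.integral_const]
      rw [smul_eq_mul]
      ring_nf
    rw [← hconst]
    apply intervalIntegral.integral_mono_on (by linarith)
      (intervalIntegrable_const) i2
    intro θ hθ
    obtain ⟨ht1, ht2⟩ := hθ
    have h0 : 0 ≤ θ := by linarith
    have hθδ : θ ≤ δ := by linarith
    have ha1 : L1^n ≤ lam α θ^n :=
      pow_le_pow_left₀ hL1pos.le (lam_anti hα hα2 h0 ht2 (by linarith : 3*δ/4 ≤ Real.pi)) n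
    have hb1' : Real.sin (δ/4) ≤ Real.sin (θ/2) := by
      apply Real.strictMonoOn_sin.monotoneOn ⟨by linarith, by linarith⟩
        ⟨by linarith, by linarith⟩ (by linarith)
    have hm2 : (0:ℝ) ≤ m/2 := div_nonneg hm.le (by norm_num)
    have hc1' : (δ/2)*(m/2) ≤ psi α r d θ :=
      le_trans (mul_le_mul_of_nonneg_right ht1 hm2) (hpsi θ h0 hθδ)
    have hsθ : 0 ≤ Real.sin (θ/2) :=
      Real.sin_nonneg_of_nonneg_of_le_pi (by linarith) (by linarith)
    have hsp : Real.sin (δ/4) * ((δ/2)*(m/2)) ≤ Real.sin (θ/2) * psi α r d θ :=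
      mul_le_mul hb1' hc1' (mul_nonneg (by linarith) hm2) hsθ
    calc L1^n * K ≤ lam α θ^n * K := mul_le_mul_of_nonneg_right ha1 hKpos.le
      _ ≤ lam α θ^n * (Real.sin (θ/2) * psi α r d θ) := by
          apply mul_le_mul_of_nonneg_left _ (pow_pos (lam_pos hα hα2 θ) n).le
          rw [hK]
          exact hsp
  have b4 : -(L2^n * (Real.pi - δ)) ≤ ∫ θ in δ..Real.pi, lam α θ^n * (Real.sin (θ/2) * psi α r d θ) := by
    have hb : ‖∫ θ in δ..Real.pi, lam α θ^n * (Real.sin (θ/2) * psi α r d θ)‖ ≤ L2^n * |Real.pi - δ| := by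
      apply intervalIntegral.norm_integral_le_of_norm_le_const
      intro x hx
      rw [Set.uIoc_of_le hδπ] at hx
      obtain ⟨hx1, hx2⟩ := hx
      have hlx : 0 < lam α x := lam_pos hα hα2 x
      have hlam : lam α x ≤ L2 := lam_anti hα hα2 hδ0.le hx1.le hx2
      have hpow : lam α x^n ≤ L2^n := pow_le_pow_left₀ hlx.le hlam n
      rw [Real.norm_eq_abs, abs_mul]
      have h1 : |lam α x^n| = lam α x^n := abs_of_nonneg (pow_pos hlx n).le
      rw [h1, abs_mul]
      calc lam α x^n * (|Real.sin (x/2)| * |psi α r d x|)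
          ≤ lam α x^n * (1 * 1) := by
            apply mul_le_mul_of_nonneg_left _ (pow_pos hlx n).le
            exact mul_le_mul (Real.abs_sin_le_one _) (psi_abs_le_one hα hα2 r d x)
              (abs_nonneg _) zero_le_one
        _ = lam α x^n := by ring
        _ ≤ L2^n := hpow
    rw [abs_of_nonneg (by linarith : (0:ℝ) ≤ Real.pi - δ)] at hb
    have := neg_abs_le (∫ θ in δ..Real.pi, lam α θ^n * (Real.sin (θ/2) * psi α r d θ))
    rw [Real.norm_eq_abs] at hb
    linarith
  have hfinal : c1 * L1^n - Real.pi * L2^n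
      ≤ ∫ θ in (0:ℝ)..Real.pi, lam α θ^n * (Real.sin (θ/2) * psi α r d θ) := by
    rw [← split3, ← split2, ← split1]
    have : c1 * L1^n = (δ/4) * (L1^n * K) := by rw [hc1]; ring
    have hπδ : L2^n * (Real.pi - δ) ≤ Real.pi * L2^n := by
      have : 0 < L2^n := pow_pos hL2pos n
      nlinarith
    linarith
  linarith

end Analysis
end QPart
end CP

theorem competeProb_eventually_decreasing (r d : ℕ) (hd : 1 ≤ d) (hrd : 2 * d ≤ r)
    (α : ℝ) (hα0 : (2 * (d : ℝ) - 1) / (2 * r) < α) (hα : α ≤ (d : ℝ) / (r + 1)) :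
    ∃ N : ℕ, ∀ n : ℕ, N ≤ n → competeProb α r d (n + 1) < competeProb α r d n := by
  have hr1 : 1 ≤ r := by omega
  have hd1 : (1:ℝ) ≤ (d:ℝ) := by exact_mod_cast hd
  have hrpos : (0:ℝ) < (r:ℝ) := by exact_mod_cast (by omega : 0 < r)
  have hαpos : 0 < α := by
    have hnum : (0:ℝ) < 2*(d:ℝ)-1 := by linarith
    have : (0:ℝ) < (2*(d:ℝ)-1)/(2*r) := div_pos hnum (by linarith)
    linarith
  have hα2 : α < 1/2 := by
    have hcast : (2:ℝ)*(d:ℝ) ≤ (r:ℝ) := by exact_mod_cast hrd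
    have : (d:ℝ)/((r:ℝ)+1) < 1/2 := by
      rw [div_lt_iff₀ (by linarith : (0:ℝ) < (r:ℝ)+1)]
      linarith
    linarith
  have hy : (1:ℝ) - α ≠ 0 := by
    have : (0:ℝ) < 1 - α := by linarith
    linarith
  have hm : 0 < (r:ℝ)*α - d + 1/2 := by
    rw [div_lt_iff₀ (by linarith : (0:ℝ) < 2*(r:ℝ))] at hα0
    linarith
  obtain ⟨N, hN⟩ := CP.integral_pos hαpos hα2 r d hm
  refine ⟨N, fun n hn => ?_⟩
  have hI := hN n hn
  have e1 : competeProb α r d (n+1) = competeProb α r d n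
      + α*(1-α)*(CP.QQ α r n ((d:ℤ)-1) - CP.QQ α r n (d:ℤ)) := by
    rw [CP.compete_eq hαpos hy r d (n+1), CP.compete_eq hαpos hy r d n,
      CP.P_diff hαpos hy r d n hd]
  have e2 := CP.Qdiff_int (α := α) r d n
  have hxy : 0 < α*(1-α) := by nlinarith
  have hπ2 : (0:ℝ) < 2/Real.pi := by positivity
  have h3 : CP.QQ α r n ((d:ℤ)-1) - CP.QQ α r n (d:ℤ)
      = -((2/Real.pi) * ∫ θ in (0:ℝ)..Real.pi, CP.lam α θ^n * (Real.sin (θ/2) * CP.psi α r d θ)) := by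
    linarith [e2]
  have h4 : α*(1-α)*(CP.QQ α r n ((d:ℤ)-1) - CP.QQ α r n (d:ℤ)) < 0 := by
    rw [h3, mul_neg, neg_lt_zero]
    exact mul_pos hxy (mul_pos hπ2 hI)
  linarith [e1, h4]
end
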